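/- arXiv:1504.07226 — 6 statements merged into one kernel-verified Lean document; each statement's English description precedes it below -/
import Mathlib

section
/- The free ℚ-vector space 𝐒𝐣 with basis the set of all surjections, equipped with the bilinear extension of the product ⋄, is an associative unital (non-commutative) ℚ-algebra, whose unit is the unique empty surjection from [0] = ∅ to itself. -/
open scoped Classical

noncomputable section

/-- Number of distinct letters of `w` smaller than `a`. -/
def rank (w : List ℕ) (a : ℕ) : ℕ := (w.dedup.filter (fun b => b < a)).length

/-- The packing of a word over the alphabet `ℕ` (letters are 0-indexed). -/
def pack (w : List ℕ) : List ℕ := w.map (rank w)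

/-- A packed word, i.e. a word equal to its own packing.  Packed words of length `n`
whose set of letters is `{0,…,k-1}` are exactly the surjections `[n] ↠ [k]`
(written with 0-indexed values). -/
def Packed (w : List ℕ) : Prop := pack w = w

/-- The type of surjections, encoded as packed words. -/
abbrev PW := {w : List ℕ // Packed w}

/-- `𝐒𝐣`, the free `ℚ`-vector space on the set of all surjections. -/
abbrev Sj := PW →₀ ℚ

/-- All lists of length `N` with letters `< N`. -/
def candidates (N : ℕ) : Finset (List ℕ) :=
  Finset.image (fun v : Fin N → Fin N => List.ofFn (fun i => (v i : ℕ))) Finset.univ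

/-- The (finite) set of surjections `h` appearing in the product `f ⋄ g`
of two surjections: the packed words `h` of length `|f| + |g|` such that
`pack` of the first `|f|` letters of `h` is `f` and `pack` of the remaining
letters is `g`. -/
def diamondSet (f g : List ℕ) : Finset PW :=
  ((candidates (f.length + g.length)).filter
    (fun w => Packed w ∧ pack (w.take f.length) = f ∧ pack (w.drop f.length) = g)).subtype Packed

/-- The product of two basis elements of `𝐒𝐣`. -/
def diamondPW (f g : PW) : Sj := ∑ h ∈ diamondSet f.1 g.1, Finsupp.single h 1

/-- The bilinear extension `⋄` of the product of surjections to `𝐒𝐣`. -/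
def diamond (F G : Sj) : Sj :=
  F.sum fun f a => G.sum fun g b => (a * b) • diamondPW f g

/-- The empty surjection from `[0] = ∅` to itself. -/
def emptyPW : PW := ⟨[], rfl⟩

/-- The unit of `𝐒𝐣`: the empty surjection. -/
def oneSj : Sj := Finsupp.single emptyPW 1

/-- Descent set (with positions written 1-indexed, as subsets of `[n-1] = {1,…,n-1}`):
`i ∈ Desc(f)` iff `1 ≤ i ≤ n-1` and `f(i) ≥ f(i+1)`. -/
def descSet (w : List ℕ) : Finset ℕ :=
  (Finset.Icc 1 (w.length - 1)).filter (fun i => w.getD i 0 ≤ w.getD (i - 1) 0)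

/-- The (finite) set of all surjections with source `[n]`. -/
def SjWords (n : ℕ) : Finset PW :=
  ((candidates n).filter Packed).subtype Packed

/-- `D^n_{⊆ I}`: the sum of all surjections from `[n]` with descent set contained in `I`. -/
def Dsub (n : ℕ) (I : Finset ℕ) : Sj :=
  ∑ f ∈ (SjWords n).filter (fun f => descSet f.1 ⊆ I), Finsupp.single f 1

/-- `D^n_I`: the sum of all surjections from `[n]` with descent set equal to `I`. -/
def Deq (n : ℕ) (I : Finset ℕ) : Sj :=
  ∑ f ∈ (SjWords n).filter (fun f => descSet f.1 = I), Finsupp.single f 1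

lemma length_filter_lt_range (n i : ℕ) :
    ((List.range n).filter (fun x => x < i)).length = min i n := by
  induction n with
  | zero => simp
  | succ n ih =>
    rw [List.range_succ, List.filter_append, List.length_append, ih]
    by_cases h : n < i
    · simp [h]; omega
    · simp [h]; omega

lemma packed_range (n : ℕ) : Packed (List.range n) := by
  unfold Packed pack rank
  rw [List.dedup_eq_self.mpr (List.nodup_range (n := n))]
  apply List.ext_getElem (by simp)
  intro i h1 h2
  simp only [List.getElem_map, List.getElem_range, length_filter_lt_range]
  have : i < n := by simpa using h2
  omega

/-- `p_n`, the identity surjection of `[n]` (0-indexed: the word `0 1 ⋯ (n-1)`). -/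
def pWord (n : ℕ) : PW := ⟨List.range n, packed_range n⟩

/-- The set `{n₁, n₁+n₂, …, n₁+⋯+n_{k-1}}` of proper partial sums of a composition. -/
def psumsSet (c : List ℕ) : Finset ℕ :=
  (Finset.range (c.length - 1)).image (fun i => (c.take (i + 1)).sum)

/-- Iterated `⋄`-product `p_{n₁} ⋄ p_{n₂} ⋄ ⋯ ⋄ p_{n_k}` of identity surjections. -/
def diamondProd (c : List ℕ) : Sj :=
  (c.map (fun m => Finsupp.single (pWord m) (1 : ℚ))).foldr diamond oneSj


section RankPack

lemma rank_eq_card (w : List ℕ) (a : ℕ) :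
    rank w a = (w.toFinset.filter (fun b => b < a)).card := by
  unfold rank
  rw [← List.toFinset_card_of_nodup ((w.nodup_dedup).filter _)]
  congr 1
  ext x
  simp [List.mem_filter]

lemma rank_mono (w : List ℕ) {a b : ℕ} (h : a ≤ b) : rank w a ≤ rank w b := by
  rw [rank_eq_card, rank_eq_card]
  exact Finset.card_le_card (Finset.monotone_filter_right _ (fun x _ hx => lt_of_lt_of_le hx h))

lemma rank_lt_rank (w : List ℕ) {a b : ℕ} (ha : a ∈ w) (h : a < b) :
    rank w a < rank w b := by
  rw [rank_eq_card, rank_eq_card]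
  apply Finset.card_lt_card
  constructor
  · exact Finset.monotone_filter_right _ (fun x _ hx => lt_trans hx h)
  · intro hsub
    have := hsub (Finset.mem_filter.mpr ⟨List.mem_toFinset.mpr ha, h⟩)
    simp at this

lemma rank_lt_iff (w : List ℕ) {a b : ℕ} (ha : a ∈ w) :
    a < b ↔ rank w a < rank w b := by
  constructor
  · exact rank_lt_rank w ha
  · intro h
    by_contra hab
    exact absurd (rank_mono w (not_lt.mp hab)) (not_le.mpr h)

lemma rank_map (w : List ℕ) (F : ℕ → ℕ)
    (hF : ∀ a ∈ w, ∀ b ∈ w, a < b ↔ F a < F b) :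
    ∀ a ∈ w, rank (w.map F) (F a) = rank w a := by
  intro a ha
  have hinj : Set.InjOn F w.toFinset := by
    intro x hx y hy hxy
    by_contra hne
    rcases Nat.lt_or_ge x y with h | h
    · exact absurd hxy (Nat.ne_of_lt ((hF x (List.mem_toFinset.mp hx) y (List.mem_toFinset.mp hy)).mp h))
    · rcases Nat.lt_or_ge y x with h2 | h2
      · exact absurd hxy.symm (Nat.ne_of_lt ((hF y (List.mem_toFinset.mp hy) x (List.mem_toFinset.mp hx)).mp h2))
      · omega
  have htf : (w.map F).toFinset = w.toFinset.image F := by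
    ext x; simp
  rw [rank_eq_card, rank_eq_card, htf, Finset.filter_image]
  rw [Finset.card_image_of_injOn (hinj.mono (by intro x hx; exact (Finset.filter_subset _ _) hx))]
  congr 1
  apply Finset.filter_congr
  intro x hx
  -- goal: F x < F a ↔ x < a
  exact (hF x (List.mem_toFinset.mp hx) a ha).symm

lemma pack_length (w : List ℕ) : (pack w).length = w.length := by
  unfold pack; exact List.length_map _

lemma pack_map (w : List ℕ) (F : ℕ → ℕ)
    (hF : ∀ a ∈ w, ∀ b ∈ w, a < b ↔ F a < F b) :
    pack (w.map F) = pack w := by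
  unfold pack
  rw [List.map_map]
  apply List.map_congr_left
  intro a ha
  exact rank_map w F hF a ha

lemma packed_pack (w : List ℕ) : Packed (pack w) := by
  unfold Packed
  conv_lhs => rw [pack]
  exact pack_map w (rank w) (fun a ha b hb => rank_lt_iff w ha)

lemma mem_pack_lt (w : List ℕ) {a : ℕ} (ha : a ∈ pack w) : a < w.length := by
  unfold pack at ha
  rcases List.mem_map.mp ha with ⟨b, hb, rfl⟩
  calc rank w b < w.toFinset.card := by
        rw [rank_eq_card]
        apply Finset.card_lt_card
        constructor
        · exact Finset.filter_subset _ _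
        · intro hsub
          have := hsub (List.mem_toFinset.mpr hb)
          simp at this
    _ ≤ w.length := w.toFinset_card_le

lemma pack_take (w : List ℕ) (n : ℕ) :
    pack ((pack w).take n) = pack (w.take n) := by
  unfold pack
  rw [← List.map_take]
  exact pack_map (w.take n) (rank w)
    (fun a ha b hb => rank_lt_iff w (List.mem_of_mem_take ha))

lemma pack_drop (w : List ℕ) (n : ℕ) :
    pack ((pack w).drop n) = pack (w.drop n) := by
  unfold pack
  rw [← List.map_drop]
  exact pack_map (w.drop n) (rank w)
    (fun a ha b hb => rank_lt_iff w (List.mem_of_mem_drop ha))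

end RankPack
section Sets

lemma mem_candidates {N : ℕ} {w : List ℕ} :
    w ∈ candidates N ↔ w.length = N ∧ ∀ a ∈ w, a < N := by
  unfold candidates
  rw [Finset.mem_image]
  constructor
  · rintro ⟨v, -, rfl⟩
    refine ⟨by simp, ?_⟩
    intro a ha
    rcases List.mem_ofFn.mp ha with ⟨i, rfl⟩
    exact (v i).isLt
  · rintro ⟨hlen, hlt⟩
    refine ⟨fun i => ⟨w[(i : ℕ)]'(by omega), hlt _ (List.getElem_mem _)⟩, Finset.mem_univ _, ?_⟩
    apply List.ext_getElem (by simpa using hlen.symm)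
    intro i h1 h2
    simp [List.getElem_ofFn]

lemma mem_diamondSet {f g : List ℕ} {h : PW} :
    h ∈ diamondSet f g ↔ h.1.length = f.length + g.length ∧
      pack (h.1.take f.length) = f ∧ pack (h.1.drop f.length) = g := by
  unfold diamondSet
  rw [Finset.mem_subtype, Finset.mem_filter, mem_candidates]
  constructor
  · rintro ⟨⟨h1, -⟩, -, h3, h4⟩
    exact ⟨h1, h3, h4⟩
  · rintro ⟨h1, h3, h4⟩
    refine ⟨⟨h1, ?_⟩, h.2, h3, h4⟩
    intro a ha
    rw [← h1]
    have := h.2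
    unfold Packed at this
    rw [← this] at ha
    exact mem_pack_lt _ ha

/-- the set of words appearing in a triple product -/
def tripleSet (f g h : List ℕ) : Finset PW :=
  ((candidates (f.length + g.length + h.length)).filter
    (fun w => Packed w ∧ pack (w.take f.length) = f ∧
      pack ((w.drop f.length).take g.length) = g ∧
      pack (w.drop (f.length + g.length)) = h)).subtype Packed

lemma mem_tripleSet {f g h : List ℕ} {w : PW} :
    w ∈ tripleSet f g h ↔ w.1.length = f.length + g.length + h.length ∧
      pack (w.1.take f.length) = f ∧
      pack ((w.1.drop f.length).take g.length) = g ∧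
      pack (w.1.drop (f.length + g.length)) = h := by
  unfold tripleSet
  rw [Finset.mem_subtype, Finset.mem_filter, mem_candidates]
  constructor
  · rintro ⟨⟨h1, -⟩, -, h3⟩
    exact ⟨h1, h3⟩
  · rintro ⟨h1, h3⟩
    refine ⟨⟨h1, ?_⟩, w.2, h3⟩
    intro a ha
    rw [← h1]
    have := w.2
    unfold Packed at this
    rw [← this] at ha
    exact mem_pack_lt _ ha

end Sets
section Assoc

lemma drop_take_comm (w : List ℕ) (n m : ℕ) :
    (w.take (n + m)).drop n = (w.drop n).take m := by
  rw [List.drop_take]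
  congr 1
  omega

lemma biUnion_left (f g h : PW) :
    (diamondSet f.1 g.1).biUnion (fun u => diamondSet u.1 h.1) =
      tripleSet f.1 g.1 h.1 := by
  ext w
  rw [Finset.mem_biUnion, mem_tripleSet]
  constructor
  · rintro ⟨u, hu, hw⟩
    rw [mem_diamondSet] at hu hw
    obtain ⟨hul, huf, hug⟩ := hu
    obtain ⟨hwl, hwu, hwh⟩ := hw
    rw [hul] at hwl hwu hwh
    refine ⟨hwl, ?_, ?_, hwh⟩
    · have := pack_take (w.1.take (f.1.length + g.1.length)) f.1.length
      rw [hwu, List.take_take, min_eq_left (Nat.le_add_right _ _)] at this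
      rw [← this, huf]
    · have := pack_drop (w.1.take (f.1.length + g.1.length)) f.1.length
      rw [hwu, drop_take_comm] at this
      rw [← this, hug]
  · rintro ⟨hwl, hwf, hwg, hwh⟩
    refine ⟨⟨pack (w.1.take (f.1.length + g.1.length)), packed_pack _⟩, ?_, ?_⟩
    · rw [mem_diamondSet]
      have hlen : (pack (w.1.take (f.1.length + g.1.length))).length
          = f.1.length + g.1.length := by
        rw [pack_length, List.length_take]
        omega
      refine ⟨hlen, ?_, ?_⟩
      · rw [pack_take, List.take_take, min_eq_left (Nat.le_add_right _ _), hwf]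
      · rw [pack_drop, drop_take_comm, hwg]
    · rw [mem_diamondSet]
      have hlen : (pack (w.1.take (f.1.length + g.1.length))).length
          = f.1.length + g.1.length := by
        rw [pack_length, List.length_take]
        omega
      rw [hlen]
      exact ⟨by omega, rfl, hwh⟩

lemma biUnion_right (f g h : PW) :
    (diamondSet g.1 h.1).biUnion (fun v => diamondSet f.1 v.1) =
      tripleSet f.1 g.1 h.1 := by
  ext w
  rw [Finset.mem_biUnion, mem_tripleSet]
  constructor
  · rintro ⟨v, hv, hw⟩
    rw [mem_diamondSet] at hv hw
    obtain ⟨hvl, hvg, hvh⟩ := hv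
    obtain ⟨hwl, hwf, hwv⟩ := hw
    rw [hvl] at hwl
    refine ⟨by omega, hwf, ?_, ?_⟩
    · have := pack_take (w.1.drop f.1.length) g.1.length
      rw [hwv] at this
      rw [← this, hvg]
    · have := pack_drop (w.1.drop f.1.length) g.1.length
      rw [hwv, List.drop_drop] at this
      rw [← this, hvh]
  · rintro ⟨hwl, hwf, hwg, hwh⟩
    refine ⟨⟨pack (w.1.drop f.1.length), packed_pack _⟩, ?_, ?_⟩
    · rw [mem_diamondSet]
      have hlen : (pack (w.1.drop f.1.length)).length = g.1.length + h.1.length := by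
        rw [pack_length, List.length_drop]
        omega
      refine ⟨hlen, ?_, ?_⟩
      · rw [pack_take, hwg]
      · rw [pack_drop, List.drop_drop, hwh]
    · rw [mem_diamondSet]
      have hlen : (pack (w.1.drop f.1.length)).length = g.1.length + h.1.length := by
        rw [pack_length, List.length_drop]
        omega
      rw [hlen]
      exact ⟨by omega, hwf, rfl⟩

lemma disj_left (f g h : PW) :
    (↑(diamondSet f.1 g.1) : Set PW).PairwiseDisjoint
      (fun u => diamondSet u.1 h.1) := by
  intro u hu u' hu' hne
  simp only [Finset.mem_coe] at hu hu'
  rw [mem_diamondSet] at hu hu'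
  apply Finset.disjoint_left.mpr
  intro w hw hw'
  rw [mem_diamondSet] at hw hw'
  apply hne
  apply Subtype.ext
  rw [← hw.2.1, ← hw'.2.1, hu.1, hu'.1]

lemma disj_right (f g h : PW) :
    (↑(diamondSet g.1 h.1) : Set PW).PairwiseDisjoint
      (fun v => diamondSet f.1 v.1) := by
  intro v hv v' hv' hne
  simp only [Finset.mem_coe] at hv hv'
  apply Finset.disjoint_left.mpr
  intro w hw hw'
  rw [mem_diamondSet] at hw hw'
  apply hne
  apply Subtype.ext
  rw [← hw.2.2, ← hw'.2.2]

lemma diamondPW_assoc (f g h : PW) :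
    ∑ u ∈ diamondSet f.1 g.1, diamondPW u h =
      ∑ v ∈ diamondSet g.1 h.1, diamondPW f v := by
  unfold diamondPW
  rw [← Finset.sum_biUnion (disj_left f g h), ← Finset.sum_biUnion (disj_right f g h),
    biUnion_left, biUnion_right]

end Assoc
section Linear

def dInner (f : PW) : Sj →ₗ[ℚ] Sj :=
  Finsupp.lsum ℚ fun g => LinearMap.toSpanSingleton ℚ Sj (diamondPW f g)

def dL : Sj →ₗ[ℚ] Sj →ₗ[ℚ] Sj :=
  Finsupp.lsum ℚ fun f => LinearMap.toSpanSingleton ℚ (Sj →ₗ[ℚ] Sj) (dInner f)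

lemma dInner_single (f g : PW) (b : ℚ) :
    dInner f (Finsupp.single g b) = b • diamondPW f g := by
  unfold dInner
  rw [Finsupp.lsum_single, LinearMap.toSpanSingleton_apply]

lemma dL_single (f : PW) (a : ℚ) :
    dL (Finsupp.single f a) = a • dInner f := by
  unfold dL
  rw [Finsupp.lsum_single, LinearMap.toSpanSingleton_apply]

lemma dInner_apply (f : PW) (G : Sj) :
    dInner f G = G.sum fun g b => b • diamondPW f g := by
  unfold dInner
  rw [Finsupp.lsum_apply]
  rfl

lemma dL_apply (F G : Sj) : dL F G = F.sum fun f a => a • dInner f G := by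
  unfold dL
  rw [Finsupp.lsum_apply, Finsupp.sum, Finsupp.sum, LinearMap.sum_apply]
  apply Finset.sum_congr rfl
  intro f _
  rw [LinearMap.toSpanSingleton_apply, LinearMap.smul_apply]

lemma diamond_eq (F G : Sj) : diamond F G = dL F G := by
  rw [dL_apply, diamond]
  apply Finsupp.sum_congr
  intro f _
  rw [dInner_apply, Finsupp.smul_sum]
  apply Finsupp.sum_congr
  intro g _
  rw [mul_smul]

lemma single_eq_smul (x : PW) (a : ℚ) :
    Finsupp.single x a = a • Finsupp.single x (1 : ℚ) := by
  rw [Finsupp.smul_single', mul_one]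

lemma dL_basis (f g : PW) :
    dL (Finsupp.single f 1) (Finsupp.single g 1) = diamondPW f g := by
  rw [dL_single, one_smul, dInner_single, one_smul]

lemma dL_assoc_basis (f g h : PW) :
    dL (dL (Finsupp.single f 1) (Finsupp.single g 1)) (Finsupp.single h 1) =
      dL (Finsupp.single f 1) (dL (Finsupp.single g 1) (Finsupp.single h 1)) := by
  rw [dL_basis, dL_basis]
  unfold diamondPW
  rw [map_sum, map_sum, LinearMap.sum_apply]
  have l1 : ∀ u : PW, dL (Finsupp.single u (1:ℚ)) (Finsupp.single h 1) = diamondPW u h :=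
    fun u => dL_basis u h
  have l2 : ∀ v : PW, dL (Finsupp.single f (1:ℚ)) (Finsupp.single v 1) = diamondPW f v :=
    fun v => dL_basis f v
  calc ∑ u ∈ diamondSet f.1 g.1, dL (Finsupp.single u 1) (Finsupp.single h 1)
      = ∑ u ∈ diamondSet f.1 g.1, diamondPW u h := by
        exact Finset.sum_congr rfl fun u _ => l1 u
    _ = ∑ v ∈ diamondSet g.1 h.1, diamondPW f v := diamondPW_assoc f g h
    _ = ∑ v ∈ diamondSet g.1 h.1, dL (Finsupp.single f 1) (Finsupp.single v 1) :=
        Finset.sum_congr rfl fun v _ => (l2 v).symm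

lemma dL_assoc (F G H : Sj) : dL (dL F G) H = dL F (dL G H) := by
  induction F using Finsupp.induction_linear with
  | zero => simp
  | add F1 F2 h1 h2 => simp [map_add, LinearMap.add_apply, h1, h2]
  | single f a =>
    induction G using Finsupp.induction_linear with
    | zero => simp
    | add G1 G2 h1 h2 => simp [map_add, LinearMap.add_apply, h1, h2]
    | single g b =>
      induction H using Finsupp.induction_linear with
      | zero => simp
      | add H1 H2 h1 h2 => simp [map_add, h1, h2]
      | single h c =>
        rw [single_eq_smul f a, single_eq_smul g b, single_eq_smul h c]
        simp only [map_smul, LinearMap.smul_apply, map_smul]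
        rw [dL_assoc_basis]

end Linear
section Unit

lemma diamondSet_nil_left (g : PW) : diamondSet [] g.1 = {g} := by
  ext h
  rw [mem_diamondSet, Finset.mem_singleton]
  simp only [List.length_nil, List.take_zero, List.drop_zero, Nat.zero_add]
  constructor
  · rintro ⟨-, -, h3⟩
    have hp := h.2
    unfold Packed at hp
    exact Subtype.ext (hp.symm.trans h3)
  · rintro rfl
    exact ⟨rfl, rfl, h.2⟩

lemma diamondSet_nil_right (f : PW) : diamondSet f.1 [] = {f} := by
  ext h
  rw [mem_diamondSet, Finset.mem_singleton]
  simp only [List.length_nil, Nat.add_zero]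
  constructor
  · rintro ⟨h1, h2, -⟩
    rw [List.take_of_length_le (by omega)] at h2
    have hp := h.2
    unfold Packed at hp
    exact Subtype.ext (hp.symm.trans h2)
  · rintro rfl
    refine ⟨rfl, ?_, ?_⟩
    · rw [List.take_of_length_le (le_refl _)]
      exact h.2
    · rw [List.drop_length]
      rfl

lemma dPW_one_left (g : PW) : diamondPW emptyPW g = Finsupp.single g 1 := by
  unfold diamondPW
  rw [show emptyPW.1 = ([] : List ℕ) from rfl, diamondSet_nil_left, Finset.sum_singleton]

lemma dPW_one_right (f : PW) : diamondPW f emptyPW = Finsupp.single f 1 := by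
  unfold diamondPW
  rw [show emptyPW.1 = ([] : List ℕ) from rfl, diamondSet_nil_right, Finset.sum_singleton]

lemma dL_one_left (F : Sj) : dL oneSj F = F := by
  induction F using Finsupp.induction_linear with
  | zero => simp
  | add F1 F2 h1 h2 => simp [map_add, h1, h2]
  | single g b =>
    rw [oneSj, dL_single, one_smul, dInner_single, dPW_one_left, ← single_eq_smul]

lemma dL_one_right (F : Sj) : dL F oneSj = F := by
  induction F using Finsupp.induction_linear with
  | zero => simp
  | add F1 F2 h1 h2 => simp [map_add, LinearMap.add_apply, h1, h2]
  | single f a =>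
    rw [oneSj, dL_single, LinearMap.smul_apply, dInner_single, dPW_one_right, one_smul,
      ← single_eq_smul]

end Unit

section Noncomm

lemma packed_of {w : List ℕ} (h : pack w = w) : Packed w := h

def fPW : PW := ⟨[0], packed_of (by decide)⟩
def gPW : PW := ⟨[0, 0], packed_of (by decide)⟩
def wPW : PW := ⟨[0, 1, 1], packed_of (by decide)⟩

lemma diamondPW_apply (f g w : PW) :
    diamondPW f g w = if w ∈ diamondSet f.1 g.1 then 1 else 0 := by
  unfold diamondPW
  rw [Finsupp.finset_sum_apply]
  have hs : ∀ h ∈ diamondSet f.1 g.1,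
      (Finsupp.single h (1:ℚ)) w = if h = w then 1 else 0 :=
    fun h _ => Finsupp.single_apply
  rw [Finset.sum_congr rfl hs]
  exact Finset.sum_ite_eq' _ _ _

lemma w_mem : wPW ∈ diamondSet fPW.1 gPW.1 := by
  rw [mem_diamondSet]
  refine ⟨by decide, by decide, by decide⟩

lemma w_not_mem : wPW ∉ diamondSet gPW.1 fPW.1 := by
  rw [mem_diamondSet]
  intro h
  exact absurd h.2.1 (by decide)

lemma dPW_ne : diamondPW fPW gPW ≠ diamondPW gPW fPW := by
  intro h
  have := congrArg (fun F : Sj => F wPW) h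
  simp only [diamondPW_apply] at this
  rw [if_pos w_mem, if_neg w_not_mem] at this
  exact one_ne_zero this

end Noncomm

/-- The free ℚ-vector space `𝐒𝐣` with basis the set of all surjections,
equipped with the bilinear extension of the product `⋄`, is an associative unital
(non-commutative) ℚ-algebra whose unit is the unique empty surjection from `[0] = ∅`
to itself. -/
theorem Sj_is_associative_unital_noncommutative_algebra :
    (∀ F G H : Sj, diamond (diamond F G) H = diamond F (diamond G H)) ∧
    (∀ F : Sj, diamond oneSj F = F) ∧
    (∀ F : Sj, diamond F oneSj = F) ∧
    (∀ (a : ℚ) (F G : Sj), diamond (a • F) G = a • diamond F G) ∧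
    (∀ (a : ℚ) (F G : Sj), diamond F (a • G) = a • diamond F G) ∧
    (∀ F F' G : Sj, diamond (F + F') G = diamond F G + diamond F' G) ∧
    (∀ F G G' : Sj, diamond F (G + G') = diamond F G + diamond F G') ∧
    ¬ (∀ F G : Sj, diamond F G = diamond G F) := by
  refine ⟨?_, ?_, ?_, ?_, ?_, ?_, ?_, ?_⟩
  · intro F G H
    simp only [diamond_eq]
    exact dL_assoc F G H
  · intro F
    rw [diamond_eq]
    exact dL_one_left F
  · intro F
    rw [diamond_eq]
    exact dL_one_right F
  · intro a F G
    simp only [diamond_eq, map_smul, LinearMap.smul_apply]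
  · intro a F G
    simp only [diamond_eq, map_smul]
  · intro F F' G
    simp only [diamond_eq, map_add, LinearMap.add_apply]
  · intro F G G'
    simp only [diamond_eq, map_add]
  · intro hcomm
    apply dPW_ne
    have hc := hcomm (Finsupp.single fPW 1) (Finsupp.single gPW 1)
    rw [diamond_eq, diamond_eq, dL_basis, dL_basis] at hc
    exact hc

end
end

section
/- For every n ≥ 1, the family (D_{⊆I}^n)_{I ⊆ [n-1]}, indexed by all 2^{n-1} subsets I of [n-1], is linearly independent in the free ℚ-vector space 𝐒𝐣_n with basis Sj_n. -/
open scoped Classical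

noncomputable section

namespace DL

def cfun (I : Finset ℕ) (i : ℕ) : ℕ := (I ∩ Finset.Icc 1 i).card

lemma cfun_le (I : Finset ℕ) (i : ℕ) : cfun I i ≤ i := by
  have h := Finset.card_le_card (Finset.inter_subset_right (s₁ := I) (s₂ := Finset.Icc 1 i))
  simpa [cfun, Nat.card_Icc] using h

lemma cfun_succ (I : Finset ℕ) (i : ℕ) :
    cfun I (i + 1) = cfun I i + if i + 1 ∈ I then 1 else 0 := by
  have hins : Finset.Icc 1 (i + 1) = insert (i + 1) (Finset.Icc 1 i) := by
    ext x; simp [Finset.mem_Icc]; omega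
  unfold cfun
  rw [hins, Finset.inter_comm, Finset.inter_comm I]
  by_cases h : i + 1 ∈ I
  · rw [Finset.insert_inter_of_mem h, Finset.card_insert_of_notMem (by simp [Finset.mem_Icc])]
    simp [h]
  · rw [Finset.insert_inter_of_notMem h]; simp [h]

def wfun (I : Finset ℕ) (i : ℕ) : ℕ := i - cfun I i

lemma wfun_zero (I : Finset ℕ) : wfun I 0 = 0 := by simp [wfun]

lemma wfun_succ_mem {I : Finset ℕ} {i : ℕ} (h : i + 1 ∈ I) : wfun I (i + 1) = wfun I i := by
  have h1 := cfun_le I i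
  unfold wfun; rw [cfun_succ]; simp only [h, if_pos]; omega

lemma wfun_succ_not_mem {I : Finset ℕ} {i : ℕ} (h : i + 1 ∉ I) :
    wfun I (i + 1) = wfun I i + 1 := by
  have h1 := cfun_le I i
  unfold wfun; rw [cfun_succ]; simp only [h, if_neg, not_false_iff]; omega

lemma wfun_mono (I : Finset ℕ) : Monotone (wfun I) := by
  apply monotone_nat_of_le_succ
  intro i
  by_cases h : i + 1 ∈ I
  · rw [wfun_succ_mem h]
  · rw [wfun_succ_not_mem h]; omega

lemma wfun_surj (I : Finset ℕ) : ∀ j x, x ≤ wfun I j → ∃ i ≤ j, wfun I i = x := by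
  intro j
  induction j with
  | zero => intro x hx; exact ⟨0, le_refl 0, by rw [wfun_zero] at hx ⊢; omega⟩
  | succ j ih =>
    intro x hx
    by_cases h : x ≤ wfun I j
    · obtain ⟨i, hi, hv⟩ := ih x h
      exact ⟨i, by omega, hv⟩
    · refine ⟨j + 1, le_refl _, ?_⟩
      by_cases hm : j + 1 ∈ I
      · rw [wfun_succ_mem hm] at hx ⊢; omega
      · rw [wfun_succ_not_mem hm] at hx ⊢; omega



def witness (n : ℕ) (I : Finset ℕ) : List ℕ := (List.range n).map (wfun I)

lemma witness_length (n : ℕ) (I : Finset ℕ) : (witness n I).length = n := by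
  simp [witness]

lemma witness_getElem (n : ℕ) (I : Finset ℕ) (i : ℕ) (h : i < (witness n I).length) :
    (witness n I)[i] = wfun I i := by
  simp [witness]

lemma mem_witness {n : ℕ} {I : Finset ℕ} {b : ℕ} (hn : 1 ≤ n) :
    b ∈ witness n I ↔ b ≤ wfun I (n - 1) := by
  constructor
  · intro hb
    obtain ⟨i, hi, rfl⟩ := by simpa [witness] using hb
    exact wfun_mono I (by omega)
  · intro hb
    obtain ⟨i, hi, hv⟩ := wfun_surj I (n - 1) b hb
    simp only [witness, List.mem_map, List.mem_range]
    exact ⟨i, by omega, hv⟩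

lemma rank_witness {n : ℕ} {I : Finset ℕ} {i : ℕ} (hi : i < n) :
    rank (witness n I) (wfun I i) = wfun I i := by
  have hn : 1 ≤ n := by omega
  set w := witness n I with hw
  set a := wfun I i with ha
  have hnodup : (w.dedup.filter (fun b => b < a)).Nodup := (List.nodup_dedup w).filter _
  have hfin : (w.dedup.filter (fun b => b < a)).toFinset = Finset.range a := by
    ext x
    simp only [List.toFinset_filter, List.mem_toFinset, Finset.mem_filter, List.mem_dedup,
      Finset.mem_range, decide_eq_true_eq]
    constructor
    · rintro ⟨-, hx⟩; exact hx
    · intro hx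
      refine ⟨(mem_witness hn).mpr ?_, hx⟩
      have : a ≤ wfun I (n - 1) := wfun_mono I (by omega)
      omega
  have := List.toFinset_card_of_nodup hnodup
  rw [hfin] at this
  simpa [rank] using this.symm

lemma packed_witness (n : ℕ) (I : Finset ℕ) : Packed (witness n I) := by
  unfold Packed pack
  apply List.ext_getElem (by simp)
  intro i h1 h2
  rw [List.getElem_map]
  have hi : i < n := by simpa [witness] using h2
  rw [witness_getElem n I i h2]
  exact rank_witness hi

lemma witness_mem_candidates (n : ℕ) (I : Finset ℕ) : witness n I ∈ candidates n := by
  unfold candidates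
  rw [Finset.mem_image]
  have hlen : (witness n I).length = n := witness_length n I
  have hlt : ∀ (i : ℕ) (h : i < n), (witness n I)[i]'(by omega) < n := by
    intro i h
    rw [witness_getElem n I i (by omega)]
    have := cfun_le I i
    unfold wfun; omega
  refine ⟨fun j => ⟨(witness n I)[(j : ℕ)]'(by omega), hlt _ j.2⟩, Finset.mem_univ _, ?_⟩
  apply List.ext_getElem (by simpa using hlen.symm)
  intro i ha hb
  simp

lemma descSet_witness {n : ℕ} {I : Finset ℕ} (hn : 1 ≤ n) (hI : I ⊆ Finset.Icc 1 (n - 1)) :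
    descSet (witness n I) = I := by
  unfold descSet
  rw [witness_length]
  ext i
  rw [Finset.mem_filter]
  constructor
  · rintro ⟨hicc, hcond⟩
    rw [Finset.mem_Icc] at hicc
    have h1 : i < (witness n I).length := by rw [witness_length]; omega
    have h2 : i - 1 < (witness n I).length := by rw [witness_length]; omega
    rw [List.getD_eq_getElem _ _ h1, List.getD_eq_getElem _ _ h2,
      witness_getElem n I i h1, witness_getElem n I (i-1) h2] at hcond
    by_contra hmem
    have : wfun I i = wfun I (i - 1) + 1 := by
      have := wfun_succ_not_mem (i := i - 1) (I := I) (by rwa [show i - 1 + 1 = i by omega])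
      rwa [show i - 1 + 1 = i by omega] at this
    omega
  · intro hmem
    have hicc := hI hmem
    rw [Finset.mem_Icc] at hicc
    refine ⟨Finset.mem_Icc.mpr hicc, ?_⟩
    have h1 : i < (witness n I).length := by rw [witness_length]; omega
    have h2 : i - 1 < (witness n I).length := by rw [witness_length]; omega
    rw [List.getD_eq_getElem _ _ h1, List.getD_eq_getElem _ _ h2,
      witness_getElem n I i h1, witness_getElem n I (i-1) h2]
    have := wfun_succ_mem (i := i - 1) (I := I) (by rwa [show i - 1 + 1 = i by omega])
    rw [show i - 1 + 1 = i by omega] at this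
    omega

def witnessPW (n : ℕ) (I : Finset ℕ) : PW := ⟨witness n I, packed_witness n I⟩

lemma witnessPW_mem_SjWords (n : ℕ) (I : Finset ℕ) : witnessPW n I ∈ SjWords n := by
  unfold SjWords
  rw [Finset.mem_subtype]
  exact Finset.mem_filter.mpr ⟨witness_mem_candidates n I, packed_witness n I⟩

lemma Dsub_apply (n : ℕ) (I : Finset ℕ) (f0 : PW) :
    (Dsub n I) f0 = if f0 ∈ (SjWords n).filter (fun f => descSet f.1 ⊆ I) then 1 else 0 := by
  unfold Dsub
  rw [Finsupp.finset_sum_apply]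
  rw [Finset.sum_congr rfl (fun f _ => Finsupp.single_apply)]
  exact Finset.sum_ite_eq' _ f0 (fun _ => 1)

lemma Dsub_apply_witness {n : ℕ} (hn : 1 ≤ n) (I J : Finset ℕ)
    (hJ : J ⊆ Finset.Icc 1 (n - 1)) :
    (Dsub n I) (witnessPW n J) = if J ⊆ I then 1 else 0 := by
  rw [Dsub_apply]
  congr 1
  rw [Finset.mem_filter]
  simp only [witnessPW_mem_SjWords n J, true_and]
  rw [show (witnessPW n J).1 = witness n J from rfl, descSet_witness hn hJ]


end DL

/-- For every `n ≥ 1`, the family `(D^n_{⊆ I})_{I ⊆ [n-1]}`, indexed by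
all `2^{n-1}` subsets `I` of `[n-1] = {1,…,n-1}`, is linearly independent in the free
ℚ-vector space `𝐒𝐣_n` with basis `Sj_n` (here realized inside `𝐒𝐣`). -/
theorem linearIndependent_Dsub (n : ℕ) (hn : 1 ≤ n) :
    LinearIndependent ℚ
      (fun I : {I : Finset ℕ // I ⊆ Finset.Icc 1 (n - 1)} => Dsub n I.1) := by
  rw [linearIndependent_iff']
  intro s g hsum J hJ
  have key : ∀ K : {I : Finset ℕ // I ⊆ Finset.Icc 1 (n - 1)},
      ∑ I ∈ s.filter (fun I => K.1 ⊆ I.1), g I = 0 := by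
    intro K
    have h0 := congrArg (fun F : Sj => F (DL.witnessPW n K.1)) hsum
    simp only [Finsupp.coe_zero, Pi.zero_apply] at h0
    rw [Finsupp.finset_sum_apply] at h0
    have heach : ∀ I ∈ s, (g I • Dsub n I.1) (DL.witnessPW n K.1)
        = if K.1 ⊆ I.1 then g I else 0 := by
      intro I _
      rw [Finsupp.smul_apply, DL.Dsub_apply_witness hn I.1 K.1 K.2]
      by_cases h : K.1 ⊆ I.1 <;> simp [h]
    rw [Finset.sum_congr rfl heach, ← Finset.sum_filter] at h0
    exact h0
  set Nmax := (Finset.Icc 1 (n - 1)).card with hN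
  have main : ∀ k, ∀ K, K ∈ s → Nmax - K.1.card < k → g K = 0 := by
    intro k
    induction k with
    | zero => intro K _ h; omega
    | succ k ih =>
      intro K hK h
      have hk := key K
      have hmem : K ∈ s.filter (fun I => K.1 ⊆ I.1) :=
        Finset.mem_filter.mpr ⟨hK, subset_refl K.1⟩
      rw [← Finset.add_sum_erase _ g hmem] at hk
      have hzero : ∑ I ∈ (s.filter (fun I => K.1 ⊆ I.1)).erase K, g I = 0 := by
        apply Finset.sum_eq_zero
        intro I hI
        rw [Finset.mem_erase, Finset.mem_filter] at hI
        obtain ⟨hne, hIs, hKI⟩ := hI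
        have hss : K.1 ⊂ I.1 :=
          lt_of_le_of_ne hKI (fun e => hne (Subtype.ext e.symm))
        have hlt : K.1.card < I.1.card := Finset.card_lt_card hss
        have hle : I.1.card ≤ Nmax := Finset.card_le_card I.2
        exact ih I hIs (by omega)
      rw [hzero, add_zero] at hk
      exact hk
  exact main (Nmax + 1) J hJ (by omega)

end
end

section
/- The quasi-shuffle product ⧢ on T(A) admits the following explicit expression in terms of surjections: for all n, m ≥ 1 and all a_1,…,a_n, b_1,…,b_m ∈ A, a_1⋯a_n ⧢ b_1⋯b_m = ∑_f f(a_1⋯a_n b_1⋯b_m), where f runs over all surjections from [n+m] onto [k] for max(n,m) ≤ k ≤ n+m such that f(1) < f(2) < ⋯ < f(n) and f(n+1) < f(n+2) < ⋯ < f(n+m), and where for a surjection f from [N] onto [p] and letters c_1,…,c_N ∈ A one sets f(c_1⋯c_N) := (∗-product of the c_j for j ∈ f^{-1}(1)) ⊗ ⋯ ⊗ (∗-product of the c_j for j ∈ f^{-1}(p)) ∈ A^{⊗p}. -/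
open scoped Classical

noncomputable section

variable {A : Type*} [AddCommGroup A] [Module ℚ A]

/-- The word `a₁⋯a_n` as an element of the tensor module
`T(A) = ⊕_{n ≥ 0} A^{⊗n}`, realized as the tensor algebra of the module `A`
(its product is concatenation of words). -/
def word (l : List A) : TensorAlgebra ℚ A :=
  (l.map fun a => TensorAlgebra.ι ℚ a).prod

/-- Product (under a bilinear multiplication `mul` on `A`) of a nonempty list of elements
of `A`; by convention the empty product is `0` (it never occurs below, since the fibers
of a surjection are nonempty). -/
def listProd (mul : A →ₗ[ℚ] A →ₗ[ℚ] A) : List A → A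
  | [] => 0
  | x :: xs => xs.foldl (fun acc y => mul acc y) x

namespace QSAux

lemma word_nil : word ([] : List A) = 1 := rfl

lemma word_append_singleton (l : List A) (x : A) :
    word (l ++ [x]) = word l * TensorAlgebra.ι ℚ x := by
  simp [word]

def Wrd (mul : A →ₗ[ℚ] A →ₗ[ℚ] A) {N k : ℕ} (c : Fin N → A) (f : Fin N → Fin k) :
    TensorAlgebra ℚ A :=
  word (List.ofFn fun t : Fin k =>
    listProd mul (((List.finRange N).filter (fun i => f i = t)).map c))

def Sset (n m k : ℕ) : Finset (Fin (n + m) → Fin k) :=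
  (Finset.univ : Finset (Fin (n + m) → Fin k)).filter
    (fun f => Function.Surjective f ∧
      (∀ i j : Fin (n + m), i < j → (j : ℕ) < n → f i < f j) ∧
      (∀ i j : Fin (n + m), i < j → n ≤ (i : ℕ) → f i < f j))

lemma mem_Sset {n m k : ℕ} {f : Fin (n + m) → Fin k} :
    f ∈ Sset n m k ↔ Function.Surjective f ∧
      (∀ i j : Fin (n + m), i < j → (j : ℕ) < n → f i < f j) ∧
      (∀ i j : Fin (n + m), i < j → n ≤ (i : ℕ) → f i < f j) := by
  simp [Sset]

def skipF (p : ℕ) {M N : ℕ} (h : M < N) (i : Fin M) : Fin N :=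
  if _ : (i : ℕ) < p then ⟨i, lt_trans i.isLt h⟩
  else ⟨(i : ℕ) + 1, by have := i.isLt; omega⟩

lemma skipF_val (p : ℕ) {M N : ℕ} (h : M < N) (i : Fin M) :
    (skipF p h i : ℕ) = if (i : ℕ) < p then (i : ℕ) else (i : ℕ) + 1 := by
  rw [skipF]; split <;> rfl

lemma skipF_strictMono (p : ℕ) {M N : ℕ} (h : M < N) : StrictMono (skipF p h) := by
  intro i j hij
  rw [Fin.lt_def] at hij ⊢
  rw [skipF_val, skipF_val]
  split_ifs <;> omega

lemma skipF_exists (p : ℕ) {M N : ℕ} (h : M < N) (j : Fin N) (h1 : (j : ℕ) ≠ p)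
    (h2 : (j : ℕ) < p → (j : ℕ) < M) (h3 : p < (j : ℕ) → (j : ℕ) ≤ M) :
    ∃ i, skipF p h i = j := by
  rcases lt_or_gt_of_ne h1 with hj | hj
  · exact ⟨⟨j, h2 hj⟩, by apply Fin.ext; rw [skipF_val]; simp [hj]⟩
  · refine ⟨⟨(j : ℕ) - 1, by have := h3 hj; omega⟩, ?_⟩
    apply Fin.ext; rw [skipF_val]; simp only [Fin.val_mk]; split_ifs <;> omega

lemma filter_transport {M N : ℕ} (ι : Fin M → Fin N) (hι : StrictMono ι)
    (p : Fin N → Prop) [DecidablePred p] (hp : ∀ j, p j → ∃ i, ι i = j) :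
    (List.finRange N).filter (fun j => p j) =
      ((List.finRange M).filter (fun i => p (ι i))).map ι := by
  have nd1 : ((List.finRange N).filter (fun j => p j)).Nodup :=
    (List.nodup_finRange N).filter _
  have nd2 : (((List.finRange M).filter (fun i => p (ι i))).map ι).Nodup :=
    ((List.nodup_finRange M).filter _).map hι.injective
  haveI : IsAntisymm (Fin N) (· ≤ ·) := ⟨fun _ _ h h' => le_antisymm h h'⟩
  apply (fun hp h1 h2 => List.Perm.eq_of_pairwise' (r := (· ≤ ·)) h1 h2 hp) ((List.perm_ext_iff_of_nodup nd1 nd2).mpr ?_) ?_ ?_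
  · intro x
    simp only [List.mem_filter, List.mem_map, List.mem_finRange, true_and,
      decide_eq_true_eq]
    constructor
    · intro hx
      obtain ⟨i, hi⟩ := hp x hx
      exact ⟨i, ⟨by rwa [hi], hi⟩⟩
    · rintro ⟨i, hi, rfl⟩; exact hi
  · exact List.Pairwise.imp le_of_lt ((List.pairwise_lt_finRange N).filter _)
  · refine List.Pairwise.imp le_of_lt ?_
    rw [List.pairwise_map]
    exact List.Pairwise.imp (fun h => hι h) ((List.pairwise_lt_finRange M).filter _)

lemma filter_eq_singleton {N : ℕ} (x : Fin N) :
    (List.finRange N).filter (fun j => j = x) = [x] := by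
  have hsm : StrictMono (fun _ : Fin 1 => x) := by
    intro i j hij
    have hi := i.isLt; have hj := j.isLt
    exact absurd (Fin.lt_def.mp hij) (by omega)
  rw [filter_transport (fun _ : Fin 1 => x) hsm (fun j => j = x)
    (fun j hj => ⟨0, hj.symm⟩)]
  simp

lemma filter_eq_pair {N : ℕ} (x y : Fin N) (hxy : x < y) :
    (List.finRange N).filter (fun j => j = x ∨ j = y) = [x, y] := by
  have hsm : StrictMono (fun i : Fin 2 => if (i : ℕ) = 0 then x else y) := by
    intro i j hij
    have hi := i.isLt; have hj := j.isLt
    have hv := Fin.lt_def.mp hij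
    have h0 : (i : ℕ) = 0 := by omega
    have h1 : (j : ℕ) = 1 := by omega
    simpa [h0, h1] using hxy
  have hcov : ∀ j, (j = x ∨ j = y) → ∃ i : Fin 2, (if (i : ℕ) = 0 then x else y) = j := by
    intro j hj
    rcases hj with h | h
    · exact ⟨0, by simp [h]⟩
    · exact ⟨1, by simp [h]⟩
  rw [filter_transport _ hsm (fun j => j = x ∨ j = y) hcov]
  have h2 : List.finRange 2 = [0, 1] := by decide
  rw [h2]
  simp

lemma Wrd_transport {N M k : ℕ} (mul : A →ₗ[ℚ] A →ₗ[ℚ] A) (c : Fin N → A)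
    (f : Fin N → Fin (k + 1)) (g : Fin M → Fin k) (ι : Fin M → Fin N)
    (hι : StrictMono ι)
    (h1 : ∀ i, f (ι i) = (g i).castSucc)
    (h2 : ∀ j, f j ≠ Fin.last k → ∃ i, ι i = j)
    (tl : List (Fin N))
    (h3 : (List.finRange N).filter (fun j => f j = Fin.last k) = tl) :
    Wrd mul c f = Wrd mul (fun i => c (ι i)) g
      * TensorAlgebra.ι ℚ (listProd mul (tl.map c)) := by
  unfold Wrd
  rw [List.ofFn_succ', List.concat_eq_append, word_append_singleton]
  congr 2
  · apply congrArg List.ofFn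
    funext t
    rw [show (List.finRange N).filter (fun i => f i = Fin.castSucc t)
        = ((List.finRange M).filter (fun i => f (ι i) = Fin.castSucc t)).map ι from
      filter_transport ι hι _ (fun j hj => h2 j (by rw [hj]; exact (Fin.castSucc_lt_last t).ne))]
    rw [List.map_map]
    have hfil : (List.finRange M).filter (fun i => decide (f (ι i) = Fin.castSucc t))
        = (List.finRange M).filter (fun i => decide (g i = t)) := by
      apply List.filter_congr
      intro i _
      simp only [decide_eq_decide]
      rw [h1 i, Fin.castSucc_inj]
    rw [hfil]
    rfl
  · rw [h3]


lemma mem_last {n' m' k : ℕ} {f : Fin ((n' + 1) + (m' + 1)) → Fin (k + 1)}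
    (hc1 : ∀ i j : Fin ((n' + 1) + (m' + 1)), i < j → (j : ℕ) < n' + 1 → f i < f j)
    (hc2 : ∀ i j : Fin ((n' + 1) + (m' + 1)), i < j → n' + 1 ≤ (i : ℕ) → f i < f j)
    {j : Fin ((n' + 1) + (m' + 1))} (hj : f j = Fin.last k) :
    (j : ℕ) = n' ∨ (j : ℕ) = n' + m' + 1 := by
  by_contra hcon
  push_neg at hcon
  obtain ⟨ha, hb⟩ := hcon
  have hjlt := j.isLt
  rcases lt_or_ge (j : ℕ) (n' + 1) with h | h
  · have hlt : f j < f ⟨n', by omega⟩ :=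
      hc1 j ⟨n', by omega⟩ (by rw [Fin.lt_def]; simp only [Fin.val_mk]; omega)
        (by simp only [Fin.val_mk]; omega)
    have := lt_of_lt_of_le hlt (Fin.le_last _)
    rw [hj] at this
    exact lt_irrefl _ this
  · have hlt : f j < f ⟨n' + m' + 1, by omega⟩ :=
      hc2 j ⟨n' + m' + 1, by omega⟩ (by rw [Fin.lt_def]; simp only [Fin.val_mk]; omega) h
    have := lt_of_lt_of_le hlt (Fin.le_last _)
    rw [hj] at this
    exact lt_irrefl _ this

lemma val_le_of_strictMono {a b : ℕ} {f : Fin a → Fin b} (hf : StrictMono f) :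
    ∀ i : Fin a, (i : ℕ) ≤ (f i : ℕ) := by
  have H : ∀ v, ∀ h : v < a, v ≤ (f ⟨v, h⟩ : ℕ) := by
    intro v
    induction v with
    | zero => intro h; exact Nat.zero_le _
    | succ w ih =>
      intro h
      have h1 := ih (by omega)
      have h2 : f ⟨w, by omega⟩ < f ⟨w + 1, h⟩ := hf (by simp [Fin.lt_def])
      rw [Fin.lt_def] at h2
      omega
  intro i
  simpa using H i.1 i.2

lemma strictMono_surj_val {a b : ℕ} {f : Fin a → Fin b} (h1 : StrictMono f)
    (h2 : Function.Surjective f) : ∀ i, ((f i : ℕ)) = (i : ℕ) := by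
  have hbij : Function.Bijective f := ⟨h1.injective, h2⟩
  let e := Equiv.ofBijective f hbij
  have hsymm : StrictMono e.symm := by
    intro s t hst
    rcases lt_trichotomy (e.symm s) (e.symm t) with h | h | h
    · exact h
    · exfalso
      have : s = t := by
        have := congrArg e h
        simpa [e] using this
      exact absurd this (ne_of_lt hst)
    · exfalso
      have hlt := h1 h
      have hs' : f (e.symm s) = s := e.apply_symm_apply s
      have ht' : f (e.symm t) = t := e.apply_symm_apply t
      rw [hs', ht'] at hlt
      exact absurd hst (not_lt_of_gt hlt)
  intro i
  have ha := val_le_of_strictMono h1 i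
  have hb := val_le_of_strictMono hsymm (f i)
  have hei : e.symm (f i) = i := e.symm_apply_apply i
  rw [hei] at hb
  omega

lemma Sset_eq_empty {n m k : ℕ} (h : k < n ∨ k < m ∨ n + m < k) :
    Sset n m k = (∅ : Finset (Fin (n + m) → Fin k)) := by
  rw [Finset.eq_empty_iff_forall_notMem]
  intro f hf
  rw [mem_Sset] at hf
  obtain ⟨hs, hc1, hc2⟩ := hf
  rcases h with h | h | h
  · have hsm : StrictMono (fun i : Fin n => f ⟨i, by have := i.isLt; omega⟩) := by
      intro i j hij
      exact hc1 _ _ (by rw [Fin.lt_def]; simpa using Fin.lt_def.mp hij)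
        (by simpa using j.isLt)
    have := Fintype.card_le_of_injective _ hsm.injective
    simp only [Fintype.card_fin] at this
    omega
  · have hsm : StrictMono (fun i : Fin m => f ⟨n + i, by have := i.isLt; omega⟩) := by
      intro i j hij
      refine hc2 _ _ (by rw [Fin.lt_def]; simp only [Fin.val_mk]; have := Fin.lt_def.mp hij; omega)
        (by simp only [Fin.val_mk]; omega)
    have := Fintype.card_le_of_injective _ hsm.injective
    simp only [Fintype.card_fin] at this
    omega
  · have := Fintype.card_le_of_surjective f hs
    simp only [Fintype.card_fin] at this
    omega


def unskipF (p : ℕ) {M N : ℕ} (hM : 0 < M) (j : Fin N) : Fin M :=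
  if (j : ℕ) < p then ⟨min (j : ℕ) (M - 1), by omega⟩
  else ⟨min ((j : ℕ) - 1) (M - 1), by omega⟩

lemma unskipF_val (p : ℕ) {M N : ℕ} (hM : 0 < M) (j : Fin N) :
    (unskipF p hM j : ℕ) =
      if (j : ℕ) < p then min (j : ℕ) (M - 1) else min ((j : ℕ) - 1) (M - 1) := by
  rw [unskipF]; split <;> rfl

lemma unskip_skip (p : ℕ) {M N : ℕ} (hM : 0 < M) (hMN : M < N) (i : Fin M) :
    unskipF p hM (skipF p hMN i) = i := by
  apply Fin.ext
  rw [unskipF_val, skipF_val]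
  have := i.isLt
  split_ifs <;> omega

lemma skip_unskip (p : ℕ) {M N : ℕ} (hM : 0 < M) (hMN : M < N) (j : Fin N)
    (h1 : (j : ℕ) ≠ p) (h2 : (j : ℕ) < p → (j : ℕ) < M) (h3 : p < (j : ℕ) → (j : ℕ) ≤ M) :
    skipF p hMN (unskipF p hM j) = j := by
  apply Fin.ext
  rw [skipF_val, unskipF_val]
  split_ifs <;> omega

lemma sum_U (mul : A →ₗ[ℚ] A →ₗ[ℚ] A) (n' m' k : ℕ) (c : Fin ((n' + 1) + (m' + 1)) → A) :
    ∑ f ∈ (Sset (n' + 1) (m' + 1) (k + 1)).filter (fun f =>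
        f ⟨n', by omega⟩ = Fin.last k ∧ ¬ f ⟨n' + m' + 1, by omega⟩ = Fin.last k),
      Wrd mul c f
    = ∑ g ∈ Sset n' (m' + 1) k,
        Wrd mul (fun i => c (skipF n' (by omega : n' + (m' + 1) < (n' + 1) + (m' + 1)) i)) g
          * TensorAlgebra.ι ℚ (c ⟨n', by omega⟩) := by
  have hMN : n' + (m' + 1) < (n' + 1) + (m' + 1) := by omega
  have hM : 0 < n' + (m' + 1) := by omega
  have key : ∀ f ∈ (Sset (n' + 1) (m' + 1) (k + 1)).filter (fun f =>
        f ⟨n', by omega⟩ = Fin.last k ∧ ¬ f ⟨n' + m' + 1, by omega⟩ = Fin.last k),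
      ∀ i : Fin (n' + (m' + 1)), ((f (skipF n' hMN i)) : ℕ) < k := by
    intro f hf i
    simp only [Finset.mem_filter, mem_Sset] at hf
    obtain ⟨⟨hsurj, hc1, hc2⟩, hfpn, hfpm⟩ := hf
    have hne : f (skipF n' hMN i) ≠ Fin.last k := by
      intro hl
      rcases mem_last hc1 hc2 hl with h | h
      · rw [skipF_val] at h; have := i.isLt; split_ifs at h <;> omega
      · apply hfpm
        rw [← hl]
        congr 1
        apply Fin.ext
        rw [skipF_val] at h
        rw [skipF_val]
        simp only [Fin.val_mk]
        split_ifs at h ⊢ <;> omega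
    exact Fin.val_lt_last hne
  refine Finset.sum_bij'
    (fun f hf => fun i : Fin (n' + (m' + 1)) =>
      (⟨((f (skipF n' hMN i)) : ℕ), key f hf i⟩ : Fin k))
    (fun g _ => fun j : Fin ((n' + 1) + (m' + 1)) =>
      if (j : ℕ) = n' then Fin.last k else Fin.castSucc (g (unskipF n' hM j)))
    ?_ ?_ ?_ ?_ ?_
  · -- maps into target
    intro f hf
    have hf' := hf
    simp only [Finset.mem_filter, mem_Sset] at hf'
    obtain ⟨⟨hsurj, hc1, hc2⟩, hfpn, hfpm⟩ := hf'
    rw [mem_Sset]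
    refine ⟨?_, ?_, ?_⟩
    · intro t
      obtain ⟨j, hj⟩ := hsurj (Fin.castSucc t)
      have hjne : (j : ℕ) ≠ n' := by
        intro hje
        have heq : f j = Fin.last k := by
          rw [← hfpn]; congr 1; exact Fin.ext hje
        rw [hj] at heq
        exact (Fin.castSucc_lt_last t).ne heq
      obtain ⟨i, hi⟩ := skipF_exists n' hMN j hjne (fun h => by omega)
        (fun h => by have := j.isLt; omega)
      refine ⟨i, Fin.ext ?_⟩
      simp only [Fin.val_mk]
      rw [hi, hj]
      rfl
    · intro i j hij hjlt
      have hb : ((skipF n' hMN j : Fin _) : ℕ) < n' + 1 := by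
        rw [skipF_val]; split_ifs <;> omega
      have hlt := hc1 _ _ (skipF_strictMono n' hMN hij) hb
      rw [Fin.lt_def] at hlt ⊢
      simpa using hlt
    · intro i j hij hile
      have hb : n' + 1 ≤ ((skipF n' hMN i : Fin _) : ℕ) := by
        rw [skipF_val]; split_ifs <;> omega
      have hlt := hc2 _ _ (skipF_strictMono n' hMN hij) hb
      rw [Fin.lt_def] at hlt ⊢
      simpa using hlt
  · -- reverse map into source
    intro g hg
    rw [mem_Sset] at hg
    obtain ⟨hsurj, hc1, hc2⟩ := hg
    simp only [Finset.mem_filter, mem_Sset]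
    refine ⟨⟨?_, ?_, ?_⟩, ?_, ?_⟩
    · -- surjective
      intro x
      rcases eq_or_ne x (Fin.last k) with rfl | hx
      · refine ⟨⟨n', by omega⟩, ?_⟩
        simp
      · have hxlt := Fin.val_lt_last hx
        obtain ⟨i, hi⟩ := hsurj ⟨(x : ℕ), hxlt⟩
        refine ⟨skipF n' hMN i, ?_⟩
        have hne : ((skipF n' hMN i : Fin _) : ℕ) ≠ n' := by
          rw [skipF_val]; have := i.isLt; split_ifs <;> omega
        dsimp only
        rw [if_neg hne, unskip_skip, hi]
        apply Fin.ext
        simp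
    · -- cond 1
      intro i j hij hjlt
      have hvij := Fin.lt_def.mp hij
      by_cases hj : (j : ℕ) = n'
      · rw [if_pos hj, if_neg (by omega)]
        exact Fin.castSucc_lt_last _
      · have hj' : (j : ℕ) < n' := by omega
        rw [if_neg (by omega), if_neg hj, Fin.castSucc_lt_castSucc_iff]
        apply hc1
        · rw [Fin.lt_def, unskipF_val, unskipF_val]
          have := j.isLt
          split_ifs <;> omega
        · rw [unskipF_val]
          split_ifs <;> omega
    · -- cond 2
      intro i j hij hile
      have hvij := Fin.lt_def.mp hij
      have hvj := j.isLt
      rw [if_neg (by omega), if_neg (by omega), Fin.castSucc_lt_castSucc_iff]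
      apply hc2
      · rw [Fin.lt_def, unskipF_val, unskipF_val]
        split_ifs <;> omega
      · rw [unskipF_val]
        split_ifs <;> omega
    · -- f pn = last
      simp
    · -- ¬ f pm = last
      rw [if_neg (show ¬ ((⟨n' + m' + 1, by omega⟩ : Fin ((n' + 1) + (m' + 1))) : ℕ) = n' by
        simp only [Fin.val_mk]; omega)]
      exact (Fin.castSucc_lt_last _).ne
  · -- left inverse
    intro f hf
    have hf' := hf
    simp only [Finset.mem_filter, mem_Sset] at hf'
    obtain ⟨⟨hsurj, hc1, hc2⟩, hfpn, hfpm⟩ := hf'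
    funext j
    dsimp only
    by_cases hj : (j : ℕ) = n'
    · rw [if_pos hj, ← hfpn]
      congr 1
      exact (Fin.ext hj).symm
    · rw [if_neg hj]
      apply Fin.ext
      simp only [Fin.coe_castSucc, Fin.val_mk]
      rw [skip_unskip n' hM hMN j hj (fun h => by omega)
        (fun h => by have := j.isLt; omega)]
  · -- right inverse
    intro g hg
    funext i
    have hne : ((skipF n' hMN i : Fin _) : ℕ) ≠ n' := by
      rw [skipF_val]; have := i.isLt; split_ifs <;> omega
    apply Fin.ext
    dsimp only
    rw [if_neg hne, unskip_skip]
    rfl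
  · -- summand equality
    intro f hf
    have hf' := hf
    simp only [Finset.mem_filter, mem_Sset] at hf'
    obtain ⟨⟨hsurj, hc1, hc2⟩, hfpn, hfpm⟩ := hf'
    refine (Wrd_transport mul c f
      (fun i => (⟨((f (skipF n' hMN i)) : ℕ), key f hf i⟩ : Fin k))
      (skipF n' hMN) (skipF_strictMono n' hMN) ?_ ?_ [⟨n', by omega⟩] ?_).trans ?_
    · intro i
      apply Fin.ext
      simp
    · intro j hjne
      have hjn : (j : ℕ) ≠ n' := by
        intro h
        apply hjne
        rw [← hfpn]
        congr 1
        exact Fin.ext h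
      exact skipF_exists n' hMN j hjn (fun h => by omega)
        (fun h => by have := j.isLt; omega)
    · have hiff : ∀ j : Fin ((n' + 1) + (m' + 1)),
          (f j = Fin.last k) ↔ (j = ⟨n', by omega⟩) := by
        intro j
        constructor
        · intro hl
          rcases mem_last hc1 hc2 hl with h | h
          · exact Fin.ext h
          · exfalso
            apply hfpm
            rw [← hl]
            congr 1
            exact (Fin.ext h).symm
        · rintro rfl
          exact hfpn
      exact (List.filter_congr (fun j _ => decide_eq_decide.mpr (hiff j))).trans
        (filter_eq_singleton _)
    · rfl


lemma sum_D (mul : A →ₗ[ℚ] A →ₗ[ℚ] A) (n' m' k : ℕ) (c : Fin ((n' + 1) + (m' + 1)) → A) :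
    ∑ f ∈ (Sset (n' + 1) (m' + 1) (k + 1)).filter (fun f =>
        f ⟨n' + m' + 1, by omega⟩ = Fin.last k ∧ ¬ f ⟨n', by omega⟩ = Fin.last k),
      Wrd mul c f
    = ∑ g ∈ Sset (n' + 1) m' k,
        Wrd mul (fun i => c (skipF (n' + m' + 1)
            (by omega : (n' + 1) + m' < (n' + 1) + (m' + 1)) i)) g
          * TensorAlgebra.ι ℚ (c ⟨n' + m' + 1, by omega⟩) := by
  have hMN : (n' + 1) + m' < (n' + 1) + (m' + 1) := by omega
  have hM : 0 < (n' + 1) + m' := by omega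
  have key : ∀ f ∈ (Sset (n' + 1) (m' + 1) (k + 1)).filter (fun f =>
        f ⟨n' + m' + 1, by omega⟩ = Fin.last k ∧ ¬ f ⟨n', by omega⟩ = Fin.last k),
      ∀ i : Fin ((n' + 1) + m'), ((f (skipF (n' + m' + 1) hMN i)) : ℕ) < k := by
    intro f hf i
    simp only [Finset.mem_filter, mem_Sset] at hf
    obtain ⟨⟨hsurj, hc1, hc2⟩, hfpm, hfpn⟩ := hf
    have hne : f (skipF (n' + m' + 1) hMN i) ≠ Fin.last k := by
      intro hl
      rcases mem_last hc1 hc2 hl with h | h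
      · apply hfpn
        rw [← hl]
        congr 1
        apply Fin.ext
        rw [skipF_val] at h
        rw [skipF_val]
        simp only [Fin.val_mk]
        split_ifs at h ⊢ <;> omega
      · rw [skipF_val] at h; have := i.isLt; split_ifs at h <;> omega
    exact Fin.val_lt_last hne
  refine Finset.sum_bij'
    (fun f hf => fun i : Fin ((n' + 1) + m') =>
      (⟨((f (skipF (n' + m' + 1) hMN i)) : ℕ), key f hf i⟩ : Fin k))
    (fun g _ => fun j : Fin ((n' + 1) + (m' + 1)) =>
      if (j : ℕ) = n' + m' + 1 then Fin.last k
      else Fin.castSucc (g (unskipF (n' + m' + 1) hM j)))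
    ?_ ?_ ?_ ?_ ?_
  · intro f hf
    have hf' := hf
    simp only [Finset.mem_filter, mem_Sset] at hf'
    obtain ⟨⟨hsurj, hc1, hc2⟩, hfpm, hfpn⟩ := hf'
    rw [mem_Sset]
    refine ⟨?_, ?_, ?_⟩
    · intro t
      obtain ⟨j, hj⟩ := hsurj (Fin.castSucc t)
      have hjne : (j : ℕ) ≠ n' + m' + 1 := by
        intro hje
        have heq : f j = Fin.last k := by
          rw [← hfpm]; congr 1; exact Fin.ext hje
        rw [hj] at heq
        exact (Fin.castSucc_lt_last t).ne heq
      obtain ⟨i, hi⟩ := skipF_exists (n' + m' + 1) hMN j hjne (fun h => by omega)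
        (fun h => by have := j.isLt; omega)
      refine ⟨i, Fin.ext ?_⟩
      simp only [Fin.val_mk]
      rw [hi, hj]
      rfl
    · intro i j hij hjlt
      have hb : ((skipF (n' + m' + 1) hMN j : Fin _) : ℕ) < n' + 1 + 1 := by
        rw [skipF_val]; split_ifs <;> omega
      have hb' : ((skipF (n' + m' + 1) hMN j : Fin _) : ℕ) < n' + 1 := by
        rw [skipF_val]; have := Fin.lt_def.mp hij; split_ifs <;> omega
      have hlt := hc1 _ _ (skipF_strictMono (n' + m' + 1) hMN hij) hb'
      rw [Fin.lt_def] at hlt ⊢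
      simpa using hlt
    · intro i j hij hile
      have hb : n' + 1 ≤ ((skipF (n' + m' + 1) hMN i : Fin _) : ℕ) := by
        rw [skipF_val]; split_ifs <;> omega
      have hlt := hc2 _ _ (skipF_strictMono (n' + m' + 1) hMN hij) hb
      rw [Fin.lt_def] at hlt ⊢
      simpa using hlt
  · intro g hg
    rw [mem_Sset] at hg
    obtain ⟨hsurj, hc1, hc2⟩ := hg
    simp only [Finset.mem_filter, mem_Sset]
    refine ⟨⟨?_, ?_, ?_⟩, ?_, ?_⟩
    · intro x
      rcases eq_or_ne x (Fin.last k) with rfl | hx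
      · refine ⟨⟨n' + m' + 1, by omega⟩, ?_⟩
        simp
      · have hxlt := Fin.val_lt_last hx
        obtain ⟨i, hi⟩ := hsurj ⟨(x : ℕ), hxlt⟩
        refine ⟨skipF (n' + m' + 1) hMN i, ?_⟩
        have hne : ((skipF (n' + m' + 1) hMN i : Fin _) : ℕ) ≠ n' + m' + 1 := by
          rw [skipF_val]; have := i.isLt; split_ifs <;> omega
        dsimp only
        rw [if_neg hne, unskip_skip, hi]
        apply Fin.ext
        simp
    · intro i j hij hjlt
      have hvij := Fin.lt_def.mp hij
      rw [if_neg (by omega), if_neg (by omega), Fin.castSucc_lt_castSucc_iff]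
      apply hc1
      · rw [Fin.lt_def, unskipF_val, unskipF_val]
        have := j.isLt
        split_ifs <;> omega
      · rw [unskipF_val]
        split_ifs <;> omega
    · intro i j hij hile
      have hvij := Fin.lt_def.mp hij
      have hvj := j.isLt
      by_cases hj : (j : ℕ) = n' + m' + 1
      · rw [if_pos hj, if_neg (by omega)]
        exact Fin.castSucc_lt_last _
      · rw [if_neg (by omega), if_neg hj, Fin.castSucc_lt_castSucc_iff]
        apply hc2
        · rw [Fin.lt_def, unskipF_val, unskipF_val]
          split_ifs <;> omega
        · rw [unskipF_val]
          split_ifs <;> omega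
    · -- f pm = last
      simp
    · -- ¬ f pn = last
      rw [if_neg (show ¬ ((⟨n', by omega⟩ : Fin ((n' + 1) + (m' + 1))) : ℕ) = n' + m' + 1 by
        simp only [Fin.val_mk]; omega)]
      exact (Fin.castSucc_lt_last _).ne
  · intro f hf
    have hf' := hf
    simp only [Finset.mem_filter, mem_Sset] at hf'
    obtain ⟨⟨hsurj, hc1, hc2⟩, hfpm, hfpn⟩ := hf'
    funext j
    dsimp only
    by_cases hj : (j : ℕ) = n' + m' + 1
    · rw [if_pos hj, ← hfpm]
      congr 1
      exact (Fin.ext hj).symm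
    · rw [if_neg hj]
      apply Fin.ext
      simp only [Fin.coe_castSucc, Fin.val_mk]
      rw [skip_unskip (n' + m' + 1) hM hMN j hj (fun h => by omega)
        (fun h => by have := j.isLt; omega)]
  · intro g hg
    funext i
    have hne : ((skipF (n' + m' + 1) hMN i : Fin _) : ℕ) ≠ n' + m' + 1 := by
      rw [skipF_val]; have := i.isLt; split_ifs <;> omega
    apply Fin.ext
    dsimp only
    rw [if_neg hne, unskip_skip]
    rfl
  · intro f hf
    have hf' := hf
    simp only [Finset.mem_filter, mem_Sset] at hf'
    obtain ⟨⟨hsurj, hc1, hc2⟩, hfpm, hfpn⟩ := hf'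
    refine (Wrd_transport mul c f
      (fun i => (⟨((f (skipF (n' + m' + 1) hMN i)) : ℕ), key f hf i⟩ : Fin k))
      (skipF (n' + m' + 1) hMN) (skipF_strictMono (n' + m' + 1) hMN) ?_ ?_
      [⟨n' + m' + 1, by omega⟩] ?_).trans ?_
    · intro i
      apply Fin.ext
      simp
    · intro j hjne
      have hjn : (j : ℕ) ≠ n' + m' + 1 := by
        intro h
        apply hjne
        rw [← hfpm]
        congr 1
        exact Fin.ext h
      exact skipF_exists (n' + m' + 1) hMN j hjn (fun h => by omega)
        (fun h => by have := j.isLt; omega)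
    · have hiff : ∀ j : Fin ((n' + 1) + (m' + 1)),
          (f j = Fin.last k) ↔ (j = ⟨n' + m' + 1, by omega⟩) := by
        intro j
        constructor
        · intro hl
          rcases mem_last hc1 hc2 hl with h | h
          · exfalso
            apply hfpn
            rw [← hl]
            congr 1
            exact (Fin.ext h).symm
          · exact Fin.ext h
        · rintro rfl
          exact hfpm
      exact (List.filter_congr (fun j _ => decide_eq_decide.mpr (hiff j))).trans
        (filter_eq_singleton _)
    · rfl


lemma sum_B (mul : A →ₗ[ℚ] A →ₗ[ℚ] A) (n' m' k : ℕ) (c : Fin ((n' + 1) + (m' + 1)) → A) :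
    ∑ f ∈ (Sset (n' + 1) (m' + 1) (k + 1)).filter (fun f =>
        f ⟨n', by omega⟩ = Fin.last k ∧ f ⟨n' + m' + 1, by omega⟩ = Fin.last k),
      Wrd mul c f
    = ∑ g ∈ Sset n' m' k,
        Wrd mul (fun i => c (skipF n'
            (by omega : n' + m' < (n' + 1) + (m' + 1)) i)) g
          * TensorAlgebra.ι ℚ (mul (c ⟨n', by omega⟩) (c ⟨n' + m' + 1, by omega⟩)) := by
  have hMN : n' + m' < (n' + 1) + (m' + 1) := by omega
  have key : ∀ f ∈ (Sset (n' + 1) (m' + 1) (k + 1)).filter (fun f =>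
        f ⟨n', by omega⟩ = Fin.last k ∧ f ⟨n' + m' + 1, by omega⟩ = Fin.last k),
      ∀ i : Fin (n' + m'), ((f (skipF n' hMN i)) : ℕ) < k := by
    intro f hf i
    simp only [Finset.mem_filter, mem_Sset] at hf
    obtain ⟨⟨hsurj, hc1, hc2⟩, hfpn, hfpm⟩ := hf
    have hne : f (skipF n' hMN i) ≠ Fin.last k := by
      intro hl
      rcases mem_last hc1 hc2 hl with h | h <;>
        (rw [skipF_val] at h; have := i.isLt; split_ifs at h <;> omega)
    exact Fin.val_lt_last hne
  refine Finset.sum_bij'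
    (fun f hf => fun i : Fin (n' + m') =>
      (⟨((f (skipF n' hMN i)) : ℕ), key f hf i⟩ : Fin k))
    (fun g _ => fun j : Fin ((n' + 1) + (m' + 1)) =>
      if hj0 : (j : ℕ) = n' ∨ (j : ℕ) = n' + m' + 1 then Fin.last k
      else Fin.castSucc (g ⟨if (j : ℕ) < n' then (j : ℕ) else (j : ℕ) - 1, by
        have := j.isLt; split_ifs <;> omega⟩))
    ?_ ?_ ?_ ?_ ?_
  · intro f hf
    have hf' := hf
    simp only [Finset.mem_filter, mem_Sset] at hf'
    obtain ⟨⟨hsurj, hc1, hc2⟩, hfpn, hfpm⟩ := hf'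
    rw [mem_Sset]
    refine ⟨?_, ?_, ?_⟩
    · intro t
      obtain ⟨j, hj⟩ := hsurj (Fin.castSucc t)
      have hjne : (j : ℕ) ≠ n' := by
        intro hje
        have heq : f j = Fin.last k := by
          rw [← hfpn]; congr 1; exact Fin.ext hje
        rw [hj] at heq
        exact (Fin.castSucc_lt_last t).ne heq
      have hjne2 : (j : ℕ) ≠ n' + m' + 1 := by
        intro hje
        have heq : f j = Fin.last k := by
          rw [← hfpm]; congr 1; exact Fin.ext hje
        rw [hj] at heq
        exact (Fin.castSucc_lt_last t).ne heq
      obtain ⟨i, hi⟩ := skipF_exists n' hMN j hjne (fun h => by omega)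
        (fun h => by have := j.isLt; omega)
      refine ⟨i, Fin.ext ?_⟩
      simp only [Fin.val_mk]
      rw [hi, hj]
      rfl
    · intro i j hij hjlt
      have hb : ((skipF n' hMN j : Fin _) : ℕ) < n' + 1 := by
        rw [skipF_val]; split_ifs <;> omega
      have hlt := hc1 _ _ (skipF_strictMono n' hMN hij) hb
      rw [Fin.lt_def] at hlt ⊢
      simpa using hlt
    · intro i j hij hile
      have hb : n' + 1 ≤ ((skipF n' hMN i : Fin _) : ℕ) := by
        rw [skipF_val]; split_ifs <;> omega
      have hlt := hc2 _ _ (skipF_strictMono n' hMN hij) hb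
      rw [Fin.lt_def] at hlt ⊢
      simpa using hlt
  · intro g hg
    rw [mem_Sset] at hg
    obtain ⟨hsurj, hc1, hc2⟩ := hg
    simp only [Finset.mem_filter, mem_Sset]
    refine ⟨⟨?_, ?_, ?_⟩, ?_, ?_⟩
    · intro x
      rcases eq_or_ne x (Fin.last k) with rfl | hx
      · refine ⟨⟨n', by omega⟩, ?_⟩
        dsimp only
        rw [dif_pos (Or.inl rfl)]
      · have hxlt := Fin.val_lt_last hx
        obtain ⟨i, hi⟩ := hsurj ⟨(x : ℕ), hxlt⟩
        refine ⟨skipF n' hMN i, ?_⟩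
        have hne : ¬ (((skipF n' hMN i : Fin _) : ℕ) = n' ∨
            ((skipF n' hMN i : Fin _) : ℕ) = n' + m' + 1) := by
          rw [skipF_val]; have := i.isLt; split_ifs <;> omega
        dsimp only
        rw [dif_neg hne]
        have hidx : ∀ idx : Fin (n' + m'), (idx : ℕ) = (i : ℕ) →
            Fin.castSucc (g idx) = x := by
          intro idx h
          rw [Fin.ext h, hi]
          apply Fin.ext
          simp
        apply hidx
        simp only [Fin.val_mk]
        rw [skipF_val]
        have := i.isLt
        split_ifs <;> omega
    · intro i j hij hjlt
      have hvij := Fin.lt_def.mp hij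
      have hvj := j.isLt
      by_cases hj : (j : ℕ) = n'
      · rw [dif_pos (Or.inl hj), dif_neg (by omega)]
        exact Fin.castSucc_lt_last _
      · rw [dif_neg (show ¬((i : ℕ) = n' ∨ (i : ℕ) = n' + m' + 1) by omega)]
        simp only [dif_neg (show ¬((j : ℕ) = n' ∨ (j : ℕ) = n' + m' + 1) by omega),
          Fin.castSucc_lt_castSucc_iff]
        apply hc1
        · rw [Fin.lt_def]
          simp only [Fin.val_mk]
          split_ifs <;> omega
        · simp only [Fin.val_mk]
          split_ifs <;> omega
    · intro i j hij hile
      have hvij := Fin.lt_def.mp hij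
      have hvj := j.isLt
      by_cases hj : (j : ℕ) = n' + m' + 1
      · rw [dif_pos (Or.inr hj), dif_neg (by omega)]
        exact Fin.castSucc_lt_last _
      · rw [dif_neg (show ¬((i : ℕ) = n' ∨ (i : ℕ) = n' + m' + 1) by omega)]
        simp only [dif_neg (show ¬((j : ℕ) = n' ∨ (j : ℕ) = n' + m' + 1) by omega),
          Fin.castSucc_lt_castSucc_iff]
        apply hc2
        · rw [Fin.lt_def]
          simp only [Fin.val_mk]
          split_ifs <;> omega
        · simp only [Fin.val_mk]
          split_ifs <;> omega
    · -- f pn = last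
      simp
    · -- f pm = last
      simp
  · intro f hf
    have hf' := hf
    simp only [Finset.mem_filter, mem_Sset] at hf'
    obtain ⟨⟨hsurj, hc1, hc2⟩, hfpn, hfpm⟩ := hf'
    funext j
    dsimp only
    by_cases hj : (j : ℕ) = n' ∨ (j : ℕ) = n' + m' + 1
    · rw [dif_pos hj]
      rcases hj with hj | hj
      · rw [← hfpn]; congr 1; exact (Fin.ext hj).symm
      · rw [← hfpm]; congr 1; exact (Fin.ext hj).symm
    · rw [dif_neg hj]
      have hidx : ∀ idx : Fin (n' + m'), skipF n' hMN idx = j →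
          Fin.castSucc (⟨((f (skipF n' hMN idx)) : ℕ), key f hf idx⟩ : Fin k) = f j := by
        intro idx h
        apply Fin.ext
        simp only [Fin.coe_castSucc, Fin.val_mk]
        rw [h]
      apply hidx
      apply Fin.ext
      rw [skipF_val]
      simp only [Fin.val_mk]
      have := j.isLt
      split_ifs <;> omega
  · intro g hg
    funext i
    have hne : ¬ (((skipF n' hMN i : Fin _) : ℕ) = n' ∨
        ((skipF n' hMN i : Fin _) : ℕ) = n' + m' + 1) := by
      rw [skipF_val]; have := i.isLt; split_ifs <;> omega
    apply Fin.ext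
    dsimp only
    rw [dif_neg hne]
    have hidx : ∀ idx : Fin (n' + m'), (idx : ℕ) = (i : ℕ) →
        ((Fin.castSucc (g idx)) : ℕ) = ((g i) : ℕ) := by
      intro idx h
      rw [Fin.ext h]
      rfl
    apply hidx
    simp only [Fin.val_mk]
    rw [skipF_val]
    have := i.isLt
    split_ifs <;> omega
  · intro f hf
    have hf' := hf
    simp only [Finset.mem_filter, mem_Sset] at hf'
    obtain ⟨⟨hsurj, hc1, hc2⟩, hfpn, hfpm⟩ := hf'
    refine (Wrd_transport mul c f
      (fun i => (⟨((f (skipF n' hMN i)) : ℕ), key f hf i⟩ : Fin k))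
      (skipF n' hMN) (skipF_strictMono n' hMN) ?_ ?_
      [⟨n', by omega⟩, ⟨n' + m' + 1, by omega⟩] ?_).trans ?_
    · intro i
      apply Fin.ext
      simp
    · intro j hjne
      have hjn : (j : ℕ) ≠ n' := by
        intro h
        apply hjne
        rw [← hfpn]
        congr 1
        exact Fin.ext h
      have hjm : (j : ℕ) ≠ n' + m' + 1 := by
        intro h
        apply hjne
        rw [← hfpm]
        congr 1
        exact Fin.ext h
      exact skipF_exists n' hMN j hjn (fun h => by omega)
        (fun h => by have := j.isLt; omega)
    · have hiff : ∀ j : Fin ((n' + 1) + (m' + 1)),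
          (f j = Fin.last k) ↔ (j = ⟨n', by omega⟩ ∨ j = ⟨n' + m' + 1, by omega⟩) := by
        intro j
        constructor
        · intro hl
          rcases mem_last hc1 hc2 hl with h | h
          · exact Or.inl (Fin.ext h)
          · exact Or.inr (Fin.ext h)
        · rintro (rfl | rfl)
          · exact hfpn
          · exact hfpm
      exact (List.filter_congr (fun j _ => decide_eq_decide.mpr (hiff j))).trans
        (filter_eq_pair _ _ (by rw [Fin.lt_def]; simp only [Fin.val_mk]; omega))
    · rfl


lemma Sset_id_left (m : ℕ) :
    Sset 0 m m = {fun i : Fin (0 + m) => (⟨(i : ℕ), by have := i.isLt; omega⟩ : Fin m)} := by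
  apply Finset.eq_singleton_iff_unique_mem.mpr
  constructor
  · rw [mem_Sset]
    refine ⟨?_, ?_, ?_⟩
    · intro x
      exact ⟨⟨(x : ℕ), by have := x.isLt; omega⟩, by apply Fin.ext; simp⟩
    · intro i j hij hjlt
      rw [Fin.lt_def]
      simp only [Fin.val_mk]
      exact Fin.lt_def.mp hij
    · intro i j hij _
      rw [Fin.lt_def]
      simp only [Fin.val_mk]
      exact Fin.lt_def.mp hij
  · intro f hf
    rw [mem_Sset] at hf
    obtain ⟨hs, _, hc2⟩ := hf
    have hmono : StrictMono f := fun i j hij => hc2 i j hij (Nat.zero_le _)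
    funext i
    apply Fin.ext
    simp only [Fin.val_mk]
    exact strictMono_surj_val hmono hs i

lemma Sset_id_right (n : ℕ) :
    Sset n 0 n = {fun i : Fin (n + 0) => (⟨(i : ℕ), by have := i.isLt; omega⟩ : Fin n)} := by
  apply Finset.eq_singleton_iff_unique_mem.mpr
  constructor
  · rw [mem_Sset]
    refine ⟨?_, ?_, ?_⟩
    · intro x
      exact ⟨⟨(x : ℕ), by have := x.isLt; omega⟩, by apply Fin.ext; simp⟩
    · intro i j hij hjlt
      rw [Fin.lt_def]
      simp only [Fin.val_mk]
      exact Fin.lt_def.mp hij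
    · intro i j hij _
      rw [Fin.lt_def]
      simp only [Fin.val_mk]
      exact Fin.lt_def.mp hij
  · intro f hf
    rw [mem_Sset] at hf
    obtain ⟨hs, hc1, _⟩ := hf
    have hmono : StrictMono f := fun i j hij =>
      hc1 i j hij (by have := j.isLt; omega)
    funext i
    apply Fin.ext
    simp only [Fin.val_mk]
    exact strictMono_surj_val hmono hs i

lemma Wrd_id {a b : ℕ} (mul : A →ₗ[ℚ] A →ₗ[ℚ] A) (hab : a = b) (c : Fin a → A) :
    Wrd mul c (fun i : Fin a => (⟨(i : ℕ), by omega⟩ : Fin b))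
      = word (List.ofFn fun t : Fin b => c ⟨(t : ℕ), by omega⟩) := by
  unfold Wrd
  congr 1
  apply congrArg List.ofFn
  funext t
  have hiff : ∀ j : Fin a,
      ((⟨(j : ℕ), by omega⟩ : Fin b) = t) ↔ (j = ⟨(t : ℕ), by omega⟩) := by
    intro j
    constructor
    · intro h; apply Fin.ext; simp only [Fin.val_mk]; exact (Fin.ext_iff.mp h).symm ▸ rfl
    · intro h; apply Fin.ext; simp only [Fin.val_mk]; exact Fin.ext_iff.mp h ▸ rfl
  rw [(List.filter_congr (fun j _ => decide_eq_decide.mpr (hiff j))).trans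
    (filter_eq_singleton _)]
  rfl


lemma main_key (mul : A →ₗ[ℚ] A →ₗ[ℚ] A)
    (up down bul sh :
      TensorAlgebra ℚ A →ₗ[ℚ] TensorAlgebra ℚ A →ₗ[ℚ] TensorAlgebra ℚ A)
    (hsh_one_left : ∀ x, sh 1 x = x)
    (hsh_one_right : ∀ x, sh x 1 = x)
    (hsh_sum : ∀ (l m : List A) (a b : A),
      sh (word (l ++ [a])) (word (m ++ [b]))
        = up (word (l ++ [a])) (word (m ++ [b]))
          + down (word (l ++ [a])) (word (m ++ [b]))
          + bul (word (l ++ [a])) (word (m ++ [b])))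
    (hup : ∀ (l m : List A) (a b : A),
      up (word (l ++ [a])) (word (m ++ [b]))
        = sh (word l) (word (m ++ [b])) * TensorAlgebra.ι ℚ a)
    (hdown : ∀ (l m : List A) (a b : A),
      down (word (l ++ [a])) (word (m ++ [b]))
        = sh (word (l ++ [a])) (word m) * TensorAlgebra.ι ℚ b)
    (hbul : ∀ (l m : List A) (a b : A),
      bul (word (l ++ [a])) (word (m ++ [b]))
        = sh (word l) (word m) * TensorAlgebra.ι ℚ (mul a b)) :
    ∀ (N n m : ℕ), n + m = N → ∀ c : Fin (n + m) → A,
      sh (word (List.ofFn fun i : Fin n => c (Fin.castAdd m i)))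
         (word (List.ofFn fun j : Fin m => c (Fin.natAdd n j)))
      = ∑ k ∈ Finset.range (n + m + 1), ∑ f ∈ Sset n m k, Wrd mul c f := by
  intro N
  induction N using Nat.strong_induction_on with
  | _ N IH =>
  intro n m hN c
  rcases n with _ | n'
  · -- n = 0
    rw [List.ofFn_zero, word_nil, hsh_one_left]
    rw [Finset.sum_eq_single_of_mem m (Finset.mem_range.mpr (by omega))
      (fun b hmem hb => by
        have := Finset.mem_range.mp hmem
        rw [Sset_eq_empty (by omega : b < 0 ∨ b < m ∨ 0 + m < b)]
        exact Finset.sum_empty)]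
    rw [Sset_id_left, Finset.sum_singleton, Wrd_id mul (by omega)]
    congr 1
    apply congrArg List.ofFn
    funext t
    apply congrArg c
    apply Fin.ext
    simp
  · rcases m with _ | m'
    · -- m = 0
      rw [List.ofFn_zero, word_nil, hsh_one_right]
      rw [Finset.sum_eq_single_of_mem (n' + 1) (Finset.mem_range.mpr (by omega))
        (fun b hmem hb => by
          have := Finset.mem_range.mp hmem
          rw [Sset_eq_empty (by omega : b < n' + 1 ∨ b < 0 ∨ (n' + 1) + 0 < b)]
          exact Finset.sum_empty)]
      rw [Sset_id_right, Finset.sum_singleton, Wrd_id mul (by omega)]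
      first
        | rfl
        | (congr 1; apply congrArg List.ofFn; funext t; rfl)
    · -- main case
      have hMN_U : n' + (m' + 1) < (n' + 1) + (m' + 1) := by omega
      have hMN_D : (n' + 1) + m' < (n' + 1) + (m' + 1) := by omega
      have hMN_B : n' + m' < (n' + 1) + (m' + 1) := by omega
      set LA : List A := List.ofFn (fun i : Fin n' => c (Fin.castAdd (m' + 1) i.castSucc))
        with hLA
      set LB : List A := List.ofFn (fun j : Fin m' => c (Fin.natAdd (n' + 1) j.castSucc))
        with hLB
      have hA : (List.ofFn fun i : Fin (n' + 1) => c (Fin.castAdd (m' + 1) i))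
          = LA ++ [c ⟨n', by omega⟩] := by
        rw [List.ofFn_succ', List.concat_eq_append]
        have hlast : c (Fin.castAdd (m' + 1) (Fin.last n')) = c ⟨n', by omega⟩ :=
          congrArg c (by apply Fin.ext; simp)
        rw [hlast, hLA]
      have hB : (List.ofFn fun j : Fin (m' + 1) => c (Fin.natAdd (n' + 1) j))
          = LB ++ [c ⟨n' + m' + 1, by omega⟩] := by
        rw [List.ofFn_succ', List.concat_eq_append]
        have hlast : c (Fin.natAdd (n' + 1) (Fin.last m')) = c ⟨n' + m' + 1, by omega⟩ :=
          congrArg c (by apply Fin.ext; simp; omega)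
        rw [hlast, hLB]
      rw [hA, hB, hsh_sum, hup, hdown, hbul]
      -- the three IH identities
      have hU' : sh (word LA) (word (LB ++ [c ⟨n' + m' + 1, by omega⟩]))
          = ∑ k ∈ Finset.range (n' + (m' + 1) + 1),
              ∑ f ∈ Sset n' (m' + 1) k,
                Wrd mul (fun i => c (skipF n' hMN_U i)) f := by
        have eU1 : (List.ofFn fun i : Fin n' =>
            (fun i => c (skipF n' hMN_U i)) (Fin.castAdd (m' + 1) i)) = LA := by
          apply congrArg List.ofFn
          funext i
          apply congrArg c
          apply Fin.ext
          rw [skipF_val]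
          have hi := i.isLt
          simp only [Fin.coe_castAdd, Fin.coe_castSucc]
          rw [if_pos (by omega)]
        have eU2 : (List.ofFn fun j : Fin (m' + 1) =>
            (fun i => c (skipF n' hMN_U i)) (Fin.natAdd n' j))
            = LB ++ [c ⟨n' + m' + 1, by omega⟩] := by
          refine Eq.trans ?_ hB
          apply congrArg List.ofFn
          funext j
          apply congrArg c
          apply Fin.ext
          rw [skipF_val]
          simp only [Fin.coe_natAdd]
          rw [if_neg (by omega)]
          omega
        rw [← eU1, ← eU2]
        exact IH (n' + (m' + 1)) (by omega) n' (m' + 1) rfl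
          (fun i => c (skipF n' hMN_U i))
      have hD' : sh (word (LA ++ [c ⟨n', by omega⟩])) (word LB)
          = ∑ k ∈ Finset.range ((n' + 1) + m' + 1),
              ∑ f ∈ Sset (n' + 1) m' k,
                Wrd mul (fun i => c (skipF (n' + m' + 1) hMN_D i)) f := by
        have eD1 : (List.ofFn fun i : Fin (n' + 1) =>
            (fun i => c (skipF (n' + m' + 1) hMN_D i)) (Fin.castAdd m' i))
            = LA ++ [c ⟨n', by omega⟩] := by
          refine Eq.trans ?_ hA
          apply congrArg List.ofFn
          funext i
          apply congrArg c
          apply Fin.ext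
          rw [skipF_val]
          have hi := i.isLt
          simp only [Fin.coe_castAdd]
          rw [if_pos (by omega)]
        have eD2 : (List.ofFn fun j : Fin m' =>
            (fun i => c (skipF (n' + m' + 1) hMN_D i)) (Fin.natAdd (n' + 1) j)) = LB := by
          apply congrArg List.ofFn
          funext j
          apply congrArg c
          apply Fin.ext
          rw [skipF_val]
          have hj := j.isLt
          simp only [Fin.coe_natAdd, Fin.coe_castSucc]
          rw [if_pos (by omega)]
        rw [← eD1, ← eD2]
        exact IH ((n' + 1) + m') (by omega) (n' + 1) m' rfl
          (fun i => c (skipF (n' + m' + 1) hMN_D i))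
      have hB' : sh (word LA) (word LB)
          = ∑ k ∈ Finset.range (n' + m' + 1),
              ∑ f ∈ Sset n' m' k,
                Wrd mul (fun i => c (skipF n' hMN_B i)) f := by
        have eB1 : (List.ofFn fun i : Fin n' =>
            (fun i => c (skipF n' hMN_B i)) (Fin.castAdd m' i)) = LA := by
          apply congrArg List.ofFn
          funext i
          apply congrArg c
          apply Fin.ext
          rw [skipF_val]
          have hi := i.isLt
          simp only [Fin.coe_castAdd, Fin.coe_castSucc]
          rw [if_pos (by omega)]
        have eB2 : (List.ofFn fun j : Fin m' =>
            (fun i => c (skipF n' hMN_B i)) (Fin.natAdd n' j)) = LB := by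
          apply congrArg List.ofFn
          funext j
          apply congrArg c
          apply Fin.ext
          rw [skipF_val]
          have hj := j.isLt
          simp only [Fin.coe_natAdd, Fin.coe_castSucc]
          rw [if_neg (by omega)]
          omega
        rw [← eB1, ← eB2]
        exact IH (n' + m') (by omega) n' m' rfl
          (fun i => c (skipF n' hMN_B i))
      -- now transform the RHS
      rw [Finset.sum_range_succ']
      rw [show (∑ f ∈ Sset (n' + 1) (m' + 1) 0, Wrd mul c f) = 0 by
        rw [Sset_eq_empty (by omega)]; exact Finset.sum_empty, add_zero]
      have hsplit : ∀ k : ℕ, ∑ f ∈ Sset (n' + 1) (m' + 1) (k + 1), Wrd mul c f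
          = (∑ f ∈ (Sset (n' + 1) (m' + 1) (k + 1)).filter (fun f =>
                f ⟨n', by omega⟩ = Fin.last k ∧ f ⟨n' + m' + 1, by omega⟩ = Fin.last k),
              Wrd mul c f)
            + (∑ f ∈ (Sset (n' + 1) (m' + 1) (k + 1)).filter (fun f =>
                f ⟨n', by omega⟩ = Fin.last k ∧ ¬ f ⟨n' + m' + 1, by omega⟩ = Fin.last k),
              Wrd mul c f)
            + (∑ f ∈ (Sset (n' + 1) (m' + 1) (k + 1)).filter (fun f =>
                f ⟨n' + m' + 1, by omega⟩ = Fin.last k ∧ ¬ f ⟨n', by omega⟩ = Fin.last k),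
              Wrd mul c f) := by
        intro k
        have h1 := Finset.sum_filter_add_sum_filter_not (Sset (n' + 1) (m' + 1) (k + 1))
          (fun f => f ⟨n', by omega⟩ = Fin.last k) (Wrd mul c)
        have h2 := Finset.sum_filter_add_sum_filter_not
          ((Sset (n' + 1) (m' + 1) (k + 1)).filter (fun f => f ⟨n', by omega⟩ = Fin.last k))
          (fun f => f ⟨n' + m' + 1, by omega⟩ = Fin.last k) (Wrd mul c)
        rw [Finset.filter_filter, Finset.filter_filter] at h2
        have h3 : (Sset (n' + 1) (m' + 1) (k + 1)).filter
              (fun f => ¬ f ⟨n', by omega⟩ = Fin.last k)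
            = (Sset (n' + 1) (m' + 1) (k + 1)).filter (fun f =>
                f ⟨n' + m' + 1, by omega⟩ = Fin.last k ∧ ¬ f ⟨n', by omega⟩ = Fin.last k) := by
          apply Finset.filter_congr
          intro f hf
          rw [mem_Sset] at hf
          obtain ⟨hsurj, hc1, hc2⟩ := hf
          constructor
          · intro hnp
            refine ⟨?_, hnp⟩
            obtain ⟨j, hj⟩ := hsurj (Fin.last k)
            rcases mem_last hc1 hc2 hj with h | h
            · exact absurd (by rw [← hj]; congr 1; exact (Fin.ext h).symm) hnp
            · rw [← hj]; congr 1; exact (Fin.ext h).symm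
          · exact And.right
        rw [h3] at h1
        rw [← h1, ← h2]
      rw [Finset.sum_congr rfl (fun k _ => hsplit k), Finset.sum_add_distrib,
        Finset.sum_add_distrib]
      have hBsum : (∑ k ∈ Finset.range ((n' + 1) + (m' + 1)),
            ∑ f ∈ (Sset (n' + 1) (m' + 1) (k + 1)).filter (fun f =>
              f ⟨n', by omega⟩ = Fin.last k ∧ f ⟨n' + m' + 1, by omega⟩ = Fin.last k),
            Wrd mul c f)
          = sh (word LA) (word LB)
            * TensorAlgebra.ι ℚ (mul (c ⟨n', by omega⟩) (c ⟨n' + m' + 1, by omega⟩)) := by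
        rw [Finset.sum_congr rfl (fun k _ => sum_B mul n' m' k c)]
        rw [Finset.sum_congr rfl (fun k _ => (Finset.sum_mul _ _ _).symm), ← Finset.sum_mul]
        rw [show (∑ k ∈ Finset.range ((n' + 1) + (m' + 1)),
              ∑ g ∈ Sset n' m' k, Wrd mul (fun i => c (skipF n' hMN_B i)) g)
            = ∑ k ∈ Finset.range (n' + m' + 1),
              ∑ g ∈ Sset n' m' k, Wrd mul (fun i => c (skipF n' hMN_B i)) g from
          (Finset.sum_subset (Finset.range_subset_range.mpr (by omega)) (fun k hk hnk => by
            have h1 := Finset.mem_range.mp hk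
            have h2 : ¬ k < n' + m' + 1 := fun h => hnk (Finset.mem_range.mpr h)
            rw [Sset_eq_empty (by omega)]
            exact Finset.sum_empty)).symm]
        rw [← hB']
      have hUsum : (∑ k ∈ Finset.range ((n' + 1) + (m' + 1)),
            ∑ f ∈ (Sset (n' + 1) (m' + 1) (k + 1)).filter (fun f =>
              f ⟨n', by omega⟩ = Fin.last k ∧ ¬ f ⟨n' + m' + 1, by omega⟩ = Fin.last k),
            Wrd mul c f)
          = sh (word LA) (word (LB ++ [c ⟨n' + m' + 1, by omega⟩]))
            * TensorAlgebra.ι ℚ (c ⟨n', by omega⟩) := by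
        rw [Finset.sum_congr rfl (fun k _ => sum_U mul n' m' k c)]
        rw [Finset.sum_congr rfl (fun k _ => (Finset.sum_mul _ _ _).symm), ← Finset.sum_mul]
        rw [Finset.sum_congr
          (congrArg Finset.range (by omega : (n' + 1) + (m' + 1) = n' + (m' + 1) + 1))
          (fun _ _ => rfl)]
        rw [← hU']
      have hDsum : (∑ k ∈ Finset.range ((n' + 1) + (m' + 1)),
            ∑ f ∈ (Sset (n' + 1) (m' + 1) (k + 1)).filter (fun f =>
              f ⟨n' + m' + 1, by omega⟩ = Fin.last k ∧ ¬ f ⟨n', by omega⟩ = Fin.last k),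
            Wrd mul c f)
          = sh (word (LA ++ [c ⟨n', by omega⟩])) (word LB)
            * TensorAlgebra.ι ℚ (c ⟨n' + m' + 1, by omega⟩) := by
        rw [Finset.sum_congr rfl (fun k _ => sum_D mul n' m' k c)]
        rw [Finset.sum_congr rfl (fun k _ => (Finset.sum_mul _ _ _).symm), ← Finset.sum_mul]
        rw [Finset.sum_congr
          (congrArg Finset.range (by omega : (n' + 1) + (m' + 1) = (n' + 1) + m' + 1))
          (fun _ _ => rfl)]
        rw [← hD']
      rw [hBsum, hUsum, hDsum]
      abel

end QSAux

/-- Explicit expression of the quasi-shuffle product in terms of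
surjections: for `n, m ≥ 1` and letters `c 0, …, c (n+m-1)` (the first `n` being the
`aᵢ`'s and the last `m` the `bⱼ`'s),
`a₁⋯a_n ⧢ b₁⋯b_m = ∑_f f(a₁⋯a_n b₁⋯b_m)`, where `f` runs over all surjections
`[n+m] ↠ [k]`, `max(n,m) ≤ k ≤ n+m`, increasing on the first `n` and on the last `m`
positions, and `f(c₁⋯c_N) := (∗-prod of the c_j, j ∈ f⁻¹(1)) ⊗ ⋯ ⊗ (∗-prod, j ∈ f⁻¹(k))`. -/
theorem quasiShuffle_eq_sum_surjections
    (mul : A →ₗ[ℚ] A →ₗ[ℚ] A)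
    (hmul_comm : ∀ a b : A, mul a b = mul b a)
    (hmul_assoc : ∀ a b c : A, mul (mul a b) c = mul a (mul b c))
    (up down bul sh :
      TensorAlgebra ℚ A →ₗ[ℚ] TensorAlgebra ℚ A →ₗ[ℚ] TensorAlgebra ℚ A)
    (hsh_one_left : ∀ x, sh 1 x = x)
    (hsh_one_right : ∀ x, sh x 1 = x)
    (hsh_sum : ∀ (l m : List A) (a b : A),
      sh (word (l ++ [a])) (word (m ++ [b]))
        = up (word (l ++ [a])) (word (m ++ [b]))
          + down (word (l ++ [a])) (word (m ++ [b]))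
          + bul (word (l ++ [a])) (word (m ++ [b])))
    (hup : ∀ (l m : List A) (a b : A),
      up (word (l ++ [a])) (word (m ++ [b]))
        = sh (word l) (word (m ++ [b])) * TensorAlgebra.ι ℚ a)
    (hdown : ∀ (l m : List A) (a b : A),
      down (word (l ++ [a])) (word (m ++ [b]))
        = sh (word (l ++ [a])) (word m) * TensorAlgebra.ι ℚ b)
    (hbul : ∀ (l m : List A) (a b : A),
      bul (word (l ++ [a])) (word (m ++ [b]))
        = sh (word l) (word m) * TensorAlgebra.ι ℚ (mul a b))
    : ∀ (n m : ℕ), 1 ≤ n → 1 ≤ m → ∀ c : Fin (n + m) → A,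
      sh (word (List.ofFn fun i : Fin n => c (Fin.castAdd m i)))
         (word (List.ofFn fun j : Fin m => c (Fin.natAdd n j)))
        = ∑ k ∈ Finset.Icc (max n m) (n + m),
            ∑ f ∈ (Finset.univ : Finset (Fin (n + m) → Fin k)).filter
                (fun f => Function.Surjective f ∧
                  (∀ i j : Fin (n + m), i < j → (j : ℕ) < n → f i < f j) ∧
                  (∀ i j : Fin (n + m), i < j → n ≤ (i : ℕ) → f i < f j)),
              word (List.ofFn fun t : Fin k =>
                listProd mul (((List.finRange (n + m)).filter (fun i => f i = t)).map c)) := by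
  intro n m hn hm c
  show sh (word (List.ofFn fun i : Fin n => c (Fin.castAdd m i)))
         (word (List.ofFn fun j : Fin m => c (Fin.natAdd n j)))
      = ∑ k ∈ Finset.Icc (max n m) (n + m), ∑ f ∈ QSAux.Sset n m k, QSAux.Wrd mul c f
  have hIccR : (∑ k ∈ Finset.Icc (max n m) (n + m), ∑ f ∈ QSAux.Sset n m k, QSAux.Wrd mul c f)
      = ∑ k ∈ Finset.range (n + m + 1), ∑ f ∈ QSAux.Sset n m k, QSAux.Wrd mul c f := by
    apply Finset.sum_subset
    · intro k hk
      rw [Finset.mem_Icc] at hk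
      rw [Finset.mem_range]
      omega
    · intro k hk hnk
      rw [Finset.mem_range] at hk
      rw [Finset.mem_Icc] at hnk
      rw [QSAux.Sset_eq_empty (by omega)]
      exact Finset.sum_empty
  rw [hIccR]
  exact QSAux.main_key mul up down bul sh hsh_one_left hsh_one_right hsh_sum hup hdown hbul
    (n + m) n m rfl c


end
end

section
/- The quasi-shuffle product ⧢ on the tensor module T(A) over a commutative associative ℚ-algebra A is commutative: x ⧢ y = y ⧢ x for all x, y ∈ T(A). -/
open scoped Classical

noncomputable section

variable {A : Type*} [AddCommGroup A] [Module ℚ A]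

/-- The quasi-shuffle product `⧢` on the tensor module `T(A)` over a
commutative associative ℚ-algebra `(A, ∗)` — i.e. the bilinear operation `sh` determined,
together with half-shuffles `↑`, `↓`, `•`, by the recursions
`a₁⋯a_n ↑ b₁⋯b_m = (a₁⋯a_{n-1} ⧢ b₁⋯b_m)a_n`,
`a₁⋯a_n ↓ b₁⋯b_m = (a₁⋯a_n ⧢ b₁⋯b_{m-1})b_m`,
`a₁⋯a_n • b₁⋯b_m = (a₁⋯a_{n-1} ⧢ b₁⋯b_{m-1})(a_n ∗ b_m)`,
`x ⧢ y = x↑y + x↓y + x•y` on nonempty words and `1 ⧢ x = x ⧢ 1 = x` —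
is commutative. -/
theorem quasiShuffle_comm
    (mul : A →ₗ[ℚ] A →ₗ[ℚ] A)
    (hmul_comm : ∀ a b : A, mul a b = mul b a)
    (hmul_assoc : ∀ a b c : A, mul (mul a b) c = mul a (mul b c))
    (up down bul sh :
      TensorAlgebra ℚ A →ₗ[ℚ] TensorAlgebra ℚ A →ₗ[ℚ] TensorAlgebra ℚ A)
    (hsh_one_left : ∀ x, sh 1 x = x)
    (hsh_one_right : ∀ x, sh x 1 = x)
    (hsh_sum : ∀ (l m : List A) (a b : A),
      sh (word (l ++ [a])) (word (m ++ [b]))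
        = up (word (l ++ [a])) (word (m ++ [b]))
          + down (word (l ++ [a])) (word (m ++ [b]))
          + bul (word (l ++ [a])) (word (m ++ [b])))
    (hup : ∀ (l m : List A) (a b : A),
      up (word (l ++ [a])) (word (m ++ [b]))
        = sh (word l) (word (m ++ [b])) * TensorAlgebra.ι ℚ a)
    (hdown : ∀ (l m : List A) (a b : A),
      down (word (l ++ [a])) (word (m ++ [b]))
        = sh (word (l ++ [a])) (word m) * TensorAlgebra.ι ℚ b)
    (hbul : ∀ (l m : List A) (a b : A),
      bul (word (l ++ [a])) (word (m ++ [b]))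
        = sh (word l) (word m) * TensorAlgebra.ι ℚ (mul a b))
    : ∀ x y : TensorAlgebra ℚ A, sh x y = sh y x := by
  have hword_nil : word ([] : List A) = 1 := rfl
  have hword_append : ∀ l m : List A, word (l ++ m) = word l * word m := by
    intro l m; simp [word]
  have key : ∀ n (l m : List A), l.length + m.length ≤ n →
      sh (word l) (word m) = sh (word m) (word l) := by
    intro n
    induction n with
    | zero =>
      intro l m h
      obtain rfl : l = [] := List.length_eq_zero_iff.mp (by omega)
      obtain rfl : m = [] := List.length_eq_zero_iff.mp (by omega)
      rfl
    | succ n ih =>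
      intro l m h
      rcases List.eq_nil_or_concat l with rfl | ⟨l', a, rfl⟩
      · rw [hword_nil, hsh_one_left, hsh_one_right]
      rcases List.eq_nil_or_concat m with rfl | ⟨m', b, rfl⟩
      · rw [hword_nil, hsh_one_left, hsh_one_right]
      simp only [List.concat_eq_append] at h ⊢
      have h' : l'.length + m'.length + 2 ≤ n + 1 := by
        simp only [List.length_append, List.length_cons, List.length_nil] at h
        omega
      rw [hsh_sum, hsh_sum, hup, hup, hdown, hdown, hbul, hbul,
          hmul_comm a b,
          ih l' (m' ++ [b]) (by simp only [List.length_append, List.length_cons, List.length_nil]; omega),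
          ih (l' ++ [a]) m' (by simp only [List.length_append, List.length_cons, List.length_nil]; omega),
          ih l' m' (by omega)]
      abel
  have hword_mem : ∀ x : TensorAlgebra ℚ A,
      x ∈ Submodule.span ℚ (Set.range (word (A := A))) := by
    intro x
    induction x using TensorAlgebra.induction with
    | algebraMap r =>
      have : (algebraMap ℚ (TensorAlgebra ℚ A) r) = r • word ([] : List A) := by
        simp [hword_nil, Algebra.algebraMap_eq_smul_one]
      rw [this]
      exact Submodule.smul_mem _ _ (Submodule.subset_span ⟨[], rfl⟩)
    | ι a =>
      have : TensorAlgebra.ι ℚ a = word [a] := by simp [word]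
      rw [this]; exact Submodule.subset_span ⟨[a], rfl⟩
    | mul x y hx hy =>
      have h1 : x * y ∈ Submodule.span ℚ (Set.range (word (A := A))) *
          Submodule.span ℚ (Set.range (word (A := A))) := Submodule.mul_mem_mul hx hy
      rw [Submodule.span_mul_span] at h1
      refine Submodule.span_mono ?_ h1
      rintro _ ⟨_, ⟨l, rfl⟩, _, ⟨m, rfl⟩, rfl⟩
      exact ⟨l ++ m, hword_append l m⟩
    | add x y hx hy => exact Submodule.add_mem _ hx hy
  have h1 : ∀ (l : List A) (y : TensorAlgebra ℚ A), sh (word l) y = sh y (word l) := by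
    intro l y
    refine Submodule.span_induction ?_ ?_ ?_ ?_ (hword_mem y)
    · rintro _ ⟨m, rfl⟩; exact key _ l m le_rfl
    · simp
    · intro a b _ _ ha hb; simp [map_add, ha, hb]
    · intro r a _ ha; simp [map_smul, ha]
  intro x y
  refine Submodule.span_induction ?_ ?_ ?_ ?_ (hword_mem x)
  · rintro _ ⟨l, rfl⟩; exact h1 l y
  · simp
  · intro a b _ _ ha hb; simp [map_add, ha, hb]
  · intro r a _ ha; simp [map_smul, ha]

end
end

section
/- The quasi-shuffle product ⧢ on the tensor module T(A) over a commutative associative ℚ-algebra A is associative: (x ⧢ y) ⧢ z = x ⧢ (y ⧢ z) for all x, y, z ∈ T(A); hence (T(A), ⧢) is a commutative associative unital ℚ-algebra with unit the empty word. -/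
open scoped Classical

noncomputable section

variable {A : Type*} [AddCommGroup A] [Module ℚ A]

set_option maxHeartbeats 1000000

/-- The quasi-shuffle product `⧢` on the tensor module `T(A)` over a
commutative associative ℚ-algebra `(A, ∗)` is associative; hence `(T(A), ⧢)` is a
commutative associative unital ℚ-algebra with unit the empty word. -/
theorem quasiShuffle_assoc
    (mul : A →ₗ[ℚ] A →ₗ[ℚ] A)
    (hmul_comm : ∀ a b : A, mul a b = mul b a)
    (hmul_assoc : ∀ a b c : A, mul (mul a b) c = mul a (mul b c))
    (up down bul sh :
      TensorAlgebra ℚ A →ₗ[ℚ] TensorAlgebra ℚ A →ₗ[ℚ] TensorAlgebra ℚ A)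
    (hsh_one_left : ∀ x, sh 1 x = x)
    (hsh_one_right : ∀ x, sh x 1 = x)
    (hsh_sum : ∀ (l m : List A) (a b : A),
      sh (word (l ++ [a])) (word (m ++ [b]))
        = up (word (l ++ [a])) (word (m ++ [b]))
          + down (word (l ++ [a])) (word (m ++ [b]))
          + bul (word (l ++ [a])) (word (m ++ [b])))
    (hup : ∀ (l m : List A) (a b : A),
      up (word (l ++ [a])) (word (m ++ [b]))
        = sh (word l) (word (m ++ [b])) * TensorAlgebra.ι ℚ a)
    (hdown : ∀ (l m : List A) (a b : A),
      down (word (l ++ [a])) (word (m ++ [b]))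
        = sh (word (l ++ [a])) (word m) * TensorAlgebra.ι ℚ b)
    (hbul : ∀ (l m : List A) (a b : A),
      bul (word (l ++ [a])) (word (m ++ [b]))
        = sh (word l) (word m) * TensorAlgebra.ι ℚ (mul a b))
    : (∀ x y z : TensorAlgebra ℚ A, sh (sh x y) z = sh x (sh y z))
      ∧ (∀ x y : TensorAlgebra ℚ A, sh x y = sh y x)
      ∧ (∀ x : TensorAlgebra ℚ A, sh (word ([] : List A)) x = x
            ∧ sh x (word ([] : List A)) = x) := by
  set ι : A →ₗ[ℚ] TensorAlgebra ℚ A := TensorAlgebra.ι ℚ with hι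
  have hword_nil : word ([] : List A) = 1 := by simp [word]
  have hcat : ∀ (l : List A) (a : A), word (l ++ [a]) = word l * ι a := by
    intro l a; simp [word, hι]
  have hwmul : ∀ l m : List A, word l * word m = word (l ++ m) := by
    intro l m; simp [word, List.prod_append]
  have hmulmem : ∀ x ∈ Submodule.span ℚ (Set.range (word (A := A))),
      ∀ y ∈ Submodule.span ℚ (Set.range (word (A := A))),
      x * y ∈ Submodule.span ℚ (Set.range (word (A := A))) := by
    intro x hx
    induction hx using Submodule.span_induction with
    | mem x hx =>
      intro y hy
      induction hy using Submodule.span_induction with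
      | mem y hy =>
        obtain ⟨l, rfl⟩ := hx; obtain ⟨m, rfl⟩ := hy
        rw [hwmul]; exact Submodule.subset_span ⟨l ++ m, rfl⟩
      | zero => rw [mul_zero]; exact zero_mem _
      | add y z _ _ ihy ihz => rw [mul_add]; exact add_mem ihy ihz
      | smul r y _ ih => rw [mul_smul_comm]; exact Submodule.smul_mem _ _ ih
    | zero => intro y hy; rw [zero_mul]; exact zero_mem _
    | add x z _ _ ihx ihz => intro y hy; rw [add_mul]; exact add_mem (ihx y hy) (ihz y hy)
    | smul r x _ ih => intro y hy; rw [smul_mul_assoc]; exact Submodule.smul_mem _ _ (ih y hy)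
  have hspan : Submodule.span ℚ (Set.range (word (A := A))) = ⊤ := by
    rw [eq_top_iff]
    rintro x -
    refine TensorAlgebra.induction ?_ ?_ ?_ ?_ x
    · intro r
      have : (algebraMap ℚ (TensorAlgebra ℚ A)) r = r • word ([] : List A) := by
        simp [hword_nil, Algebra.algebraMap_eq_smul_one]
      rw [this]; exact Submodule.smul_mem _ _ (Submodule.subset_span ⟨[], rfl⟩)
    · intro a; exact Submodule.subset_span ⟨[a], by simp [word, hι]⟩
    · intro u v hu hv; exact hmulmem u hu v hv
    · intro u v hu hv; exact add_mem hu hv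
  have hmem : ∀ x : TensorAlgebra ℚ A,
      x ∈ Submodule.span ℚ (Set.range (word (A := A))) :=
    fun x => hspan ▸ Submodule.mem_top
  -- the recursion on words, in product form
  have Rw : ∀ (l m : List A) (a b : A),
      sh (word l * ι a) (word m * ι b)
        = sh (word l) (word m * ι b) * ι a + sh (word l * ι a) (word m) * ι b
          + sh (word l) (word m) * ι (mul a b) := by
    intro l m a b
    rw [← hcat l a, ← hcat m b, hsh_sum, hup, hdown, hbul]
  -- extend to all second arguments
  have Ry : ∀ (l : List A) (a b : A) (y : TensorAlgebra ℚ A),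
      sh (word l * ι a) (y * ι b)
        = sh (word l) (y * ι b) * ι a + sh (word l * ι a) y * ι b
          + sh (word l) y * ι (mul a b) := by
    intro l a b y
    induction hmem y using Submodule.span_induction with
    | mem y hy => obtain ⟨m, rfl⟩ := hy; exact Rw l m a b
    | zero => simp
    | add y z _ _ ihy ihz =>
      simp only [add_mul, map_add, ihy, ihz]
      abel
    | smul r y _ ih =>
      simp only [smul_mul_assoc, map_smul, ih, smul_add]
  -- extend to all first arguments: the full recursion
  have Rall : ∀ (x y : TensorAlgebra ℚ A) (a b : A),
      sh (x * ι a) (y * ι b)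
        = sh x (y * ι b) * ι a + sh (x * ι a) y * ι b + sh x y * ι (mul a b) := by
    intro x y a b
    induction hmem x using Submodule.span_induction with
    | mem x hx => obtain ⟨l, rfl⟩ := hx; exact Ry l a b y
    | zero => simp
    | add x z _ _ ihx ihz =>
      simp only [add_mul, map_add, LinearMap.add_apply, ihx, ihz]
      abel
    | smul r x _ ih =>
      simp only [smul_mul_assoc, map_smul, LinearMap.smul_apply, ih, smul_add]
  -- commutativity on words, by strong induction on total length
  have Cw : ∀ (N : ℕ) (l m : List A), l.length + m.length = N →
      sh (word l) (word m) = sh (word m) (word l) := by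
    intro N
    induction N using Nat.strong_induction_on with
    | _ N ih =>
      intro l m hN
      rcases List.eq_nil_or_concat l with rfl | ⟨l', a, rfl⟩
      · simp [hword_nil, hsh_one_left, hsh_one_right]
      rcases List.eq_nil_or_concat m with rfl | ⟨m', b, rfl⟩
      · simp [hword_nil, hsh_one_left, hsh_one_right]
      simp only [List.concat_eq_append, List.length_append, List.length_cons,
        List.length_nil] at hN
      have ihp : ∀ p q : List A, p.length + q.length < N →
          sh (word p) (word q) = sh (word q) (word p) :=
        fun p q h => ih _ h p q rfl
      simp only [List.concat_eq_append, hcat]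
      rw [Rall, Rall]
      have h1 : sh (word l') (word m' * ι b) = sh (word m' * ι b) (word l') := by
        simpa only [hcat] using ihp l' (m' ++ [b]) (by simp; omega)
      have h2 : sh (word l' * ι a) (word m') = sh (word m') (word l' * ι a) := by
        simpa only [hcat] using ihp (l' ++ [a]) m' (by simp; omega)
      have h3 : sh (word l') (word m') = sh (word m') (word l') :=
        ihp l' m' (by omega)
      rw [h1, h2, h3, hmul_comm a b]
      abel
  -- associativity on words, by strong induction on total length
  have Aw : ∀ (N : ℕ) (l m n : List A), l.length + m.length + n.length = N →
      sh (sh (word l) (word m)) (word n) = sh (word l) (sh (word m) (word n)) := by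
    intro N
    induction N using Nat.strong_induction_on with
    | _ N ih =>
      intro l m n hN
      rcases List.eq_nil_or_concat l with rfl | ⟨l', a, rfl⟩
      · simp [hword_nil, hsh_one_left]
      rcases List.eq_nil_or_concat m with rfl | ⟨m', b, rfl⟩
      · simp [hword_nil, hsh_one_left, hsh_one_right]
      rcases List.eq_nil_or_concat n with rfl | ⟨n', c, rfl⟩
      · simp [hword_nil, hsh_one_right]
      simp only [List.concat_eq_append, List.length_append, List.length_cons,
        List.length_nil] at hN
      have ihp : ∀ p q r : List A, p.length + q.length + r.length < N →
          sh (sh (word p) (word q)) (word r) = sh (word p) (sh (word q) (word r)) :=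
        fun p q r h => ih _ h p q r rfl
      simp only [List.concat_eq_append, hcat]
      set x := word l' with hx
      set y := word m' with hy
      set z := word n' with hz
      have h1 : sh (sh x (y * ι b)) (z * ι c) = sh x (sh (y * ι b) (z * ι c)) := by
        simpa only [hcat] using ihp l' (m' ++ [b]) (n' ++ [c]) (by simp; omega)
      have h2 : sh (sh (x * ι a) y) (z * ι c) = sh (x * ι a) (sh y (z * ι c)) := by
        simpa only [hcat] using ihp (l' ++ [a]) m' (n' ++ [c]) (by simp; omega)
      have h3 : sh (sh x y) (z * ι c) = sh x (sh y (z * ι c)) := by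
        simpa only [hcat] using ihp l' m' (n' ++ [c]) (by simp; omega)
      have h4 : sh (sh x (y * ι b)) z = sh x (sh (y * ι b) z) := by
        simpa only [hcat] using ihp l' (m' ++ [b]) n' (by simp; omega)
      have h5 : sh (sh (x * ι a) y) z = sh (x * ι a) (sh y z) := by
        simpa only [hcat] using ihp (l' ++ [a]) m' n' (by simp; omega)
      have h6 : sh (sh x y) z = sh x (sh y z) := ihp l' m' n' (by omega)
      have hlmn : sh (sh (x * ι a) (y * ι b)) z = sh (x * ι a) (sh (y * ι b) z) := by
        simpa only [hcat] using ihp (l' ++ [a]) (m' ++ [b]) n' (by simp; omega)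
      -- the common normal form
      have hL : sh (sh (x * ι a) (y * ι b)) (z * ι c)
          = sh x (sh (y * ι b) (z * ι c)) * ι a
            + sh (x * ι a) (sh y (z * ι c)) * ι b
            + sh (x * ι a) (sh (y * ι b) z) * ι c
            + sh x (sh y (z * ι c)) * ι (mul a b)
            + sh x (sh (y * ι b) z) * ι (mul a c)
            + sh (x * ι a) (sh y z) * ι (mul b c)
            + sh x (sh y z) * ι (mul a (mul b c)) := by
        have hmid : sh (x * ι a) (sh (y * ι b) z) * ι c
            = sh (sh x (y * ι b) * ι a) z * ι c
              + sh (sh (x * ι a) y * ι b) z * ι c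
              + sh (sh x y * ι (mul a b)) z * ι c := by
          rw [← hlmn, Rall x y a b]
          simp only [map_add, LinearMap.add_apply, add_mul]
        rw [Rall x y a b]
        simp only [map_add, LinearMap.add_apply]
        rw [Rall (sh x (y * ι b)) z a c, Rall (sh (x * ι a) y) z b c,
          Rall (sh x y) z (mul a b) c]
        rw [h1, h2, h3, h4, h5, h6, hmul_assoc a b c, hmid]
        abel
      have hR : sh (x * ι a) (sh (y * ι b) (z * ι c))
          = sh x (sh (y * ι b) (z * ι c)) * ι a
            + sh (x * ι a) (sh y (z * ι c)) * ι b
            + sh (x * ι a) (sh (y * ι b) z) * ι c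
            + sh x (sh y (z * ι c)) * ι (mul a b)
            + sh x (sh (y * ι b) z) * ι (mul a c)
            + sh (x * ι a) (sh y z) * ι (mul b c)
            + sh x (sh y z) * ι (mul a (mul b c)) := by
        rw [Rall y z b c]
        simp only [map_add]
        rw [Rall x (sh y (z * ι c)) a b, Rall x (sh (y * ι b) z) a c,
          Rall x (sh y z) a (mul b c)]
        simp only [add_mul]
        abel
      exact hL.trans hR.symm
  -- extend commutativity to all of T(A)
  have hcomm : ∀ x y : TensorAlgebra ℚ A, sh x y = sh y x := by
    have h : sh = sh.flip := by
      apply LinearMap.ext_on hspan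
      rintro x ⟨l, rfl⟩
      apply LinearMap.ext_on hspan
      rintro y ⟨m, rfl⟩
      rw [LinearMap.flip_apply]
      exact Cw _ l m rfl
    intro x y
    conv_lhs => rw [h]
    rw [LinearMap.flip_apply]
  -- extend associativity to all of T(A)
  have step1 : ∀ l m : List A,
      sh (sh (word l) (word m)) = (sh (word l)).comp (sh (word m)) := by
    intro l m
    apply LinearMap.ext_on hspan
    rintro z ⟨n, rfl⟩
    rw [LinearMap.comp_apply]
    exact Aw _ l m n rfl
  have step2 : ∀ (l : List A) (y : TensorAlgebra ℚ A),
      sh (sh (word l) y) = (sh (word l)).comp (sh y) := by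
    intro l
    have h : sh.comp (sh (word l))
        = (LinearMap.llcomp ℚ (TensorAlgebra ℚ A) (TensorAlgebra ℚ A)
            (TensorAlgebra ℚ A) (sh (word l))).comp sh := by
      apply LinearMap.ext_on hspan
      rintro y ⟨m, rfl⟩
      rw [LinearMap.comp_apply, LinearMap.comp_apply, LinearMap.llcomp_apply']
      exact step1 l m
    intro y
    have := DFunLike.congr_fun h y
    rw [LinearMap.comp_apply, LinearMap.comp_apply, LinearMap.llcomp_apply'] at this
    exact this
  have step3 : ∀ x y : TensorAlgebra ℚ A, sh (sh x y) = (sh x).comp (sh y) := by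
    intro x y
    have h : sh.comp (sh.flip y)
        = (LinearMap.lcomp ℚ (TensorAlgebra ℚ A) (sh y)).comp sh := by
      apply LinearMap.ext_on hspan
      rintro x ⟨l, rfl⟩
      rw [LinearMap.comp_apply, LinearMap.comp_apply, LinearMap.flip_apply,
        LinearMap.lcomp_apply']
      exact step2 l y
    have := DFunLike.congr_fun h x
    rw [LinearMap.comp_apply, LinearMap.comp_apply, LinearMap.flip_apply,
      LinearMap.lcomp_apply'] at this
    exact this
  refine ⟨fun x y z => ?_, hcomm, fun x => ⟨?_, ?_⟩⟩
  · have := DFunLike.congr_fun (step3 x y) z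
    rw [LinearMap.comp_apply] at this
    exact this
  · simpa [hword_nil] using hsh_one_left x
  · simpa [hword_nil] using hsh_one_right x

end
end

section
/- The operations ↑, ↓, •, ⧢ on T(A) satisfy the half-shuffle axiom (x ↑ y) ↑ z = x ↑ (y ⧢ z) for all nonempty words x, y, z ∈ T(A) (extended bilinearly), where y ⧢ z = y↑z + y↓z + y•z. -/
open scoped Classical

noncomputable section

variable {A : Type*} [AddCommGroup A] [Module ℚ A]

/-- The span of the nonempty words: the bilinear extension of statements about
half-shuffles of nonempty words holds on this submodule of `T(A)`. -/
def augWords : Submodule ℚ (TensorAlgebra ℚ A) :=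
  Submodule.span ℚ {x | ∃ l : List A, l ≠ [] ∧ x = word l}

lemma word_nil : word ([] : List A) = 1 := rfl

lemma word_append (l : List A) (a : A) :
    word (l ++ [a]) = word l * TensorAlgebra.ι ℚ a := by
  simp [word]

def wordSpan : Submodule ℚ (TensorAlgebra ℚ A) :=
  Submodule.span ℚ {x | ∃ l : List A, x = word l}

lemma word_mem (l : List A) : word l ∈ (wordSpan : Submodule ℚ (TensorAlgebra ℚ A)) :=
  Submodule.subset_span ⟨l, rfl⟩

section Sh
variable (mul : A →ₗ[ℚ] A →ₗ[ℚ] A)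
  (sh up : TensorAlgebra ℚ A →ₗ[ℚ] TensorAlgebra ℚ A →ₗ[ℚ] TensorAlgebra ℚ A)

/-- recursion hypothesis -/
def Hrec : Prop := ∀ (l m : List A) (a b : A),
  sh (word (l ++ [a])) (word (m ++ [b]))
    = sh (word l) (word (m ++ [b])) * TensorAlgebra.ι ℚ a
      + sh (word (l ++ [a])) (word m) * TensorAlgebra.ι ℚ b
      + sh (word l) (word m) * TensorAlgebra.ι ℚ (mul a b)

variable {mul sh up}

lemma sh_word_mem (h1 : ∀ x, sh 1 x = x) (h2 : ∀ x, sh x 1 = x)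
    (hrec : Hrec mul sh) :
    ∀ l m : List A, sh (word l) (word m) ∈ (wordSpan : Submodule ℚ (TensorAlgebra ℚ A)) := by
  suffices H : ∀ N (l m : List A), l.length + m.length = N →
      sh (word l) (word m) ∈ (wordSpan : Submodule ℚ (TensorAlgebra ℚ A)) from
    fun l m => H _ l m rfl
  intro N
  induction N using Nat.strong_induction_on with
  | _ N IH =>
  intro l m hN
  rcases l.eq_nil_or_concat with rfl | ⟨l, a, rfl⟩
  · rw [word_nil, h1]; exact word_mem m
  rcases m.eq_nil_or_concat with rfl | ⟨m, b, rfl⟩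
  · rw [word_nil, h2]; exact word_mem _
  simp only [List.concat_eq_append] at *
  have mulmem : ∀ u ∈ (wordSpan : Submodule ℚ (TensorAlgebra ℚ A)), ∀ c : A,
      u * TensorAlgebra.ι ℚ c ∈ (wordSpan : Submodule ℚ (TensorAlgebra ℚ A)) := by
    intro u hu
    induction hu using Submodule.span_induction with
    | mem x hx => obtain ⟨p, rfl⟩ := hx; intro c; rw [← word_append]; exact word_mem _
    | zero => intro c; rw [zero_mul]; exact zero_mem _
    | add x y hx hy ihx ihy => intro c; rw [add_mul]; exact add_mem (ihx c) (ihy c)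
    | smul r x hx ihx => intro c; rw [smul_mul_assoc]; exact Submodule.smul_mem _ _ (ihx c)
  rw [hrec l m a b]
  simp only [List.length_append, List.length_cons, List.length_nil] at hN
  refine add_mem (add_mem ?_ ?_) ?_
  · exact mulmem _ (IH (l.length + (m ++ [b]).length) (by simp only [List.length_append, List.length_cons, List.length_nil]; omega) l (m ++ [b]) rfl) a
  · exact mulmem _ (IH ((l ++ [a]).length + m.length) (by simp only [List.length_append, List.length_cons, List.length_nil]; omega) (l ++ [a]) m rfl) b
  · exact mulmem _ (IH (l.length + m.length) (by omega) l m rfl) _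

lemma shExpL (hrec : Hrec mul sh) :
    ∀ u ∈ (wordSpan : Submodule ℚ (TensorAlgebra ℚ A)), ∀ (d c : A) (n : List A),
      sh (u * TensorAlgebra.ι ℚ d) (word (n ++ [c]))
        = sh u (word (n ++ [c])) * TensorAlgebra.ι ℚ d
          + sh (u * TensorAlgebra.ι ℚ d) (word n) * TensorAlgebra.ι ℚ c
          + sh u (word n) * TensorAlgebra.ι ℚ (mul d c) := by
  intro u hu
  induction hu using Submodule.span_induction with
  | mem x hx =>
      obtain ⟨p, rfl⟩ := hx
      intro d c n
      rw [← word_append]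
      exact hrec p n d c
  | zero => intro d c n; simp
  | add x y hx hy ihx ihy =>
      intro d c n
      simp only [add_mul, map_add, LinearMap.add_apply, ihx d c n, ihy d c n]
      abel
  | smul r x hx ihx =>
      intro d c n
      simp only [smul_mul_assoc, map_smul, LinearMap.smul_apply, ihx d c n]
      simp only [smul_add, smul_mul_assoc]

lemma shExpR (hrec : Hrec mul sh) :
    ∀ v ∈ (wordSpan : Submodule ℚ (TensorAlgebra ℚ A)), ∀ (l : List A) (a e : A),
      sh (word (l ++ [a])) (v * TensorAlgebra.ι ℚ e)
        = sh (word l) (v * TensorAlgebra.ι ℚ e) * TensorAlgebra.ι ℚ a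
          + sh (word (l ++ [a])) v * TensorAlgebra.ι ℚ e
          + sh (word l) v * TensorAlgebra.ι ℚ (mul a e) := by
  intro v hv
  induction hv using Submodule.span_induction with
  | mem x hx =>
      obtain ⟨q, rfl⟩ := hx
      intro l a e
      rw [← word_append]
      exact hrec l q a e
  | zero => intro l a e; simp
  | add x y hx hy ihx ihy =>
      intro l a e
      simp only [add_mul, map_add, LinearMap.add_apply, ihx l a e, ihy l a e]
      abel
  | smul r x hx ihx =>
      intro l a e
      simp only [smul_mul_assoc, map_smul, LinearMap.smul_apply, ihx l a e]
      simp only [smul_add, smul_mul_assoc]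

lemma sh_assoc (h1 : ∀ x, sh 1 x = x) (h2 : ∀ x, sh x 1 = x)
    (hrec : Hrec mul sh)
    (hassoc : ∀ a b c : A, mul (mul a b) c = mul a (mul b c)) :
    ∀ l m n : List A,
      sh (sh (word l) (word m)) (word n) = sh (word l) (sh (word m) (word n)) := by
  have hmem := sh_word_mem h1 h2 hrec
  have hEL := shExpL hrec
  have hER := shExpR hrec
  suffices H : ∀ N (l m n : List A), l.length + m.length + n.length = N →
      sh (sh (word l) (word m)) (word n) = sh (word l) (sh (word m) (word n)) from
    fun l m n => H _ l m n rfl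
  intro N
  induction N using Nat.strong_induction_on with
  | _ N IH =>
  intro l m n hN
  rcases l.eq_nil_or_concat with rfl | ⟨l, a, rfl⟩
  · rw [word_nil, h1, h1]
  rcases m.eq_nil_or_concat with rfl | ⟨m, b, rfl⟩
  · rw [word_nil, h2, h1]
  rcases n.eq_nil_or_concat with rfl | ⟨n, c, rfl⟩
  · rw [word_nil, h2, h2]
  simp only [List.concat_eq_append] at *
  simp only [List.length_append, List.length_cons, List.length_nil] at hN
  -- IH instances
  have IH1 : sh (sh (word l) (word (m ++ [b]))) (word (n ++ [c]))
      = sh (word l) (sh (word (m ++ [b])) (word (n ++ [c]))) :=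
    IH (l.length + (m ++ [b]).length + (n ++ [c]).length)
      (by simp only [List.length_append, List.length_cons, List.length_nil]; omega) _ _ _ rfl
  have IH2 : sh (sh (word (l ++ [a])) (word m)) (word (n ++ [c]))
      = sh (word (l ++ [a])) (sh (word m) (word (n ++ [c]))) :=
    IH ((l ++ [a]).length + m.length + (n ++ [c]).length)
      (by simp only [List.length_append, List.length_cons, List.length_nil]; omega) _ _ _ rfl
  have IH3 : sh (sh (word l) (word m)) (word (n ++ [c]))
      = sh (word l) (sh (word m) (word (n ++ [c]))) :=
    IH (l.length + m.length + (n ++ [c]).length)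
      (by simp only [List.length_append, List.length_cons, List.length_nil]; omega) _ _ _ rfl
  have IH4 : sh (sh (word (l ++ [a])) (word (m ++ [b]))) (word n)
      = sh (word (l ++ [a])) (sh (word (m ++ [b])) (word n)) :=
    IH ((l ++ [a]).length + (m ++ [b]).length + n.length)
      (by simp only [List.length_append, List.length_cons, List.length_nil]; omega) _ _ _ rfl
  have IH5 : sh (sh (word l) (word (m ++ [b]))) (word n)
      = sh (word l) (sh (word (m ++ [b])) (word n)) :=
    IH (l.length + (m ++ [b]).length + n.length)
      (by simp only [List.length_append, List.length_cons, List.length_nil]; omega) _ _ _ rfl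
  have IH6 : sh (sh (word (l ++ [a])) (word m)) (word n)
      = sh (word (l ++ [a])) (sh (word m) (word n)) :=
    IH ((l ++ [a]).length + m.length + n.length)
      (by simp only [List.length_append, List.length_cons, List.length_nil]; omega) _ _ _ rfl
  have IH7 : sh (sh (word l) (word m)) (word n) = sh (word l) (sh (word m) (word n)) :=
    IH (l.length + m.length + n.length) (by omega) _ _ _ rfl
  -- expand both sides
  rw [hrec l m a b, hrec m n b c]
  simp only [map_add, LinearMap.add_apply]
  rw [hEL _ (hmem l (m ++ [b])) a c n, hEL _ (hmem (l ++ [a]) m) b c n,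
      hEL _ (hmem l m) (mul a b) c n,
      hER _ (hmem m (n ++ [c])) l a b, hER _ (hmem (m ++ [b]) n) l a c,
      hER _ (hmem m n) l a (mul b c)]
  -- step 1 : rewrite the leading LHS block
  rw [IH1, hrec m n b c, map_add, map_add, add_mul, add_mul]
  -- step 2 : expand the RHS middle (ι c) block backwards
  rw [← IH4, hrec l m a b]
  simp only [map_add, LinearMap.add_apply]
  rw [add_mul, add_mul]
  rw [IH2, IH3, IH5, IH6, IH7, hassoc a b c]
  abel

lemma upExpL (hup : ∀ (l m : List A) (a b : A),
      up (word (l ++ [a])) (word (m ++ [b]))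
        = sh (word l) (word (m ++ [b])) * TensorAlgebra.ι ℚ a) :
    ∀ u ∈ (wordSpan : Submodule ℚ (TensorAlgebra ℚ A)), ∀ (a c : A) (n : List A),
      up (u * TensorAlgebra.ι ℚ a) (word (n ++ [c]))
        = sh u (word (n ++ [c])) * TensorAlgebra.ι ℚ a := by
  intro u hu
  induction hu using Submodule.span_induction with
  | mem x hx =>
      obtain ⟨p, rfl⟩ := hx
      intro a c n
      rw [← word_append]
      exact hup p n a c
  | zero => intro a c n; simp
  | add x y hx hy ihx ihy =>
      intro a c n
      simp only [add_mul, map_add, LinearMap.add_apply, ihx a c n, ihy a c n]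
  | smul r x hx ihx =>
      intro a c n
      simp only [smul_mul_assoc, map_smul, LinearMap.smul_apply, ihx a c n]

lemma upExpR (hup : ∀ (l m : List A) (a b : A),
      up (word (l ++ [a])) (word (m ++ [b]))
        = sh (word l) (word (m ++ [b])) * TensorAlgebra.ι ℚ a) :
    ∀ v ∈ (wordSpan : Submodule ℚ (TensorAlgebra ℚ A)), ∀ (l : List A) (a e : A),
      up (word (l ++ [a])) (v * TensorAlgebra.ι ℚ e)
        = sh (word l) (v * TensorAlgebra.ι ℚ e) * TensorAlgebra.ι ℚ a := by
  intro v hv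
  induction hv using Submodule.span_induction with
  | mem x hx =>
      obtain ⟨q, rfl⟩ := hx
      intro l a e
      rw [← word_append]
      exact hup l q a e
  | zero => intro l a e; simp
  | add x y hx hy ihx ihy =>
      intro l a e
      simp only [add_mul, map_add, LinearMap.add_apply, ihx l a e, ihy l a e]
  | smul r x hx ihx =>
      intro l a e
      simp only [smul_mul_assoc, map_smul, LinearMap.smul_apply, ihx l a e]

lemma key_words (h1 : ∀ x, sh 1 x = x) (h2 : ∀ x, sh x 1 = x)
    (hrec : Hrec mul sh)
    (hassoc : ∀ a b c : A, mul (mul a b) c = mul a (mul b c))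
    (hup : ∀ (l m : List A) (a b : A),
      up (word (l ++ [a])) (word (m ++ [b]))
        = sh (word l) (word (m ++ [b])) * TensorAlgebra.ι ℚ a)
    (l m n : List A) (a b c : A) :
    up (up (word (l ++ [a])) (word (m ++ [b]))) (word (n ++ [c]))
      = up (word (l ++ [a])) (sh (word (m ++ [b])) (word (n ++ [c]))) := by
  have hmem := sh_word_mem h1 h2 hrec
  rw [hup l m a b,
      upExpL hup _ (hmem l (m ++ [b])) a c n,
      sh_assoc h1 h2 hrec hassoc l (m ++ [b]) (n ++ [c]),
      hrec m n b c]
  simp only [map_add, LinearMap.add_apply]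
  rw [upExpR hup _ (hmem m (n ++ [c])) l a b,
      upExpR hup _ (hmem (m ++ [b]) n) l a c,
      upExpR hup _ (hmem m n) l a (mul b c),
      add_mul, add_mul]

end Sh

/-- The operations `↑`, `↓`, `•`, `⧢` on `T(A)` satisfy the half-shuffle
axiom `(x ↑ y) ↑ z = x ↑ (y ⧢ z)` for all nonempty words `x, y, z`, extended bilinearly
(i.e., for all `x, y, z` in the span of the nonempty words), where `y ⧢ z = y↑z + y↓z + y•z`. -/
theorem quasiShuffle_halfShuffle_axiom
    (mul : A →ₗ[ℚ] A →ₗ[ℚ] A)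
    (hmul_comm : ∀ a b : A, mul a b = mul b a)
    (hmul_assoc : ∀ a b c : A, mul (mul a b) c = mul a (mul b c))
    (up down bul sh :
      TensorAlgebra ℚ A →ₗ[ℚ] TensorAlgebra ℚ A →ₗ[ℚ] TensorAlgebra ℚ A)
    (hsh_one_left : ∀ x, sh 1 x = x)
    (hsh_one_right : ∀ x, sh x 1 = x)
    (hsh_sum : ∀ (l m : List A) (a b : A),
      sh (word (l ++ [a])) (word (m ++ [b]))
        = up (word (l ++ [a])) (word (m ++ [b]))
          + down (word (l ++ [a])) (word (m ++ [b]))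
          + bul (word (l ++ [a])) (word (m ++ [b])))
    (hup : ∀ (l m : List A) (a b : A),
      up (word (l ++ [a])) (word (m ++ [b]))
        = sh (word l) (word (m ++ [b])) * TensorAlgebra.ι ℚ a)
    (hdown : ∀ (l m : List A) (a b : A),
      down (word (l ++ [a])) (word (m ++ [b]))
        = sh (word (l ++ [a])) (word m) * TensorAlgebra.ι ℚ b)
    (hbul : ∀ (l m : List A) (a b : A),
      bul (word (l ++ [a])) (word (m ++ [b]))
        = sh (word l) (word m) * TensorAlgebra.ι ℚ (mul a b))
    : ∀ x ∈ (augWords : Submodule ℚ (TensorAlgebra ℚ A)), ∀ y ∈ (augWords : Submodule ℚ (TensorAlgebra ℚ A)),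
      ∀ z ∈ (augWords : Submodule ℚ (TensorAlgebra ℚ A)),
        up (up x y) z = up x (sh y z) := by

  have hrec : Hrec mul sh := fun l m a b => by
    rw [hsh_sum, hup, hdown, hbul]
  intro x hx y hy z hz
  have hx' : x ∈ Submodule.span ℚ {x : TensorAlgebra ℚ A | ∃ l : List A, l ≠ [] ∧ x = word l} := hx
  have hy' : y ∈ Submodule.span ℚ {x : TensorAlgebra ℚ A | ∃ l : List A, l ≠ [] ∧ x = word l} := hy
  have hz' : z ∈ Submodule.span ℚ {x : TensorAlgebra ℚ A | ∃ l : List A, l ≠ [] ∧ x = word l} := hz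
  clear hx hy hz
  induction hx' using Submodule.span_induction with
  | mem x hxm =>
    induction hy' using Submodule.span_induction with
    | mem y hym =>
      induction hz' using Submodule.span_induction with
      | mem z hzm =>
        obtain ⟨lx, hlx, rfl⟩ := hxm
        obtain ⟨ly, hly, rfl⟩ := hym
        obtain ⟨lz, hlz, rfl⟩ := hzm
        rcases lx.eq_nil_or_concat with rfl | ⟨l, a, rfl⟩
        · exact absurd rfl hlx
        rcases ly.eq_nil_or_concat with rfl | ⟨m, b, rfl⟩
        · exact absurd rfl hly
        rcases lz.eq_nil_or_concat with rfl | ⟨n, c, rfl⟩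
        · exact absurd rfl hlz
        simp only [List.concat_eq_append]
        exact key_words hsh_one_left hsh_one_right hrec hmul_assoc hup l m n a b c
      | zero => simp
      | add z1 z2 hz1 hz2 ih1 ih2 => simp only [map_add, ih1, ih2]
      | smul r zz hzm ih => simp only [map_smul, ih]
    | zero => simp
    | add y1 y2 hy1 hy2 ih1 ih2 => simp only [map_add, LinearMap.add_apply, ih1, ih2]
    | smul r yy hym ih => simp only [map_smul, LinearMap.smul_apply, ih]
  | zero => simp
  | add x1 x2 hx1 hx2 ih1 ih2 => simp only [map_add, LinearMap.add_apply, ih1, ih2]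
  | smul r xx hxm ih => simp only [map_smul, LinearMap.smul_apply, ih]

end
end
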